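/- arXiv:2510.22157 — 8 statements merged into one kernel-verified Lean document; each statement's English description precedes it below -/
import Mathlib

section
/- For every i ∈ {1,…,d}, the i-th entry of the diagonal estimator is an unbiased estimator of the i-th diagonal entry of the tensor: E[y_i] = a_{i,…,i}. -/
open MeasureTheory ProbabilityTheory Finset

/-- The diagonal estimator: `y i = Σ_j a_{j_1,…,j_{N-1},i} ∏_t g^{(t)}_{j_t} g^{(t)}_i`,
where the tensor has order `N = M + 1`. -/
noncomputable def diagEstimator {M d : ℕ} (a : (Fin (M + 1) → Fin d) → ℝ)
    {Ω : Type*} (g : Fin M → Fin d → Ω → ℝ) (i : Fin d) (ω : Ω) : ℝ :=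
  ∑ j : Fin M → Fin d, a (Fin.snoc j i) * ∏ t : Fin M, g t (j t) ω * g t i ω

/-- The integral of a finite product of independent integrable random variables is the
product of integrals (and the product is integrable). -/
lemma indep_prod_integral {ι Ω : Type*} [MeasureSpace Ω]
    [IsProbabilityMeasure (ℙ : Measure Ω)] (Y : ι → Ω → ℝ)
    (h : iIndepFun Y ℙ)
    (hm : ∀ p, Measurable (Y p)) (hint : ∀ p, Integrable (Y p) ℙ) (s : Finset ι) :
    Integrable (fun ω => ∏ p ∈ s, Y p ω) ℙ ∧
      ∫ ω, ∏ p ∈ s, Y p ω ∂ℙ = ∏ p ∈ s, ∫ ω, Y p ω ∂ℙ := by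
  classical
  induction s using Finset.induction with
  | empty => simp
  | @insert a s ha ih =>
    have hfe : (∏ p ∈ s, Y p) = fun ω => ∏ p ∈ s, Y p ω := by
      funext ω; simp
    have hIndep : IndepFun (Y a) (fun ω => ∏ p ∈ s, Y p ω) ℙ := by
      have := (h.indepFun_finsetProd_of_notMem hm ha).symm
      rwa [hfe] at this
    have hInt := hIndep.integrable_mul (hint a) ih.1
    have hEq := hIndep.integral_mul_eq_mul_integral (hint a).1 ih.1.1
    have h1 : (fun ω => ∏ p ∈ insert a s, Y p ω)
        = (Y a * fun ω => ∏ p ∈ s, Y p ω) := by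
      funext ω; simp [Finset.prod_insert ha]
    constructor
    · rw [h1]; exact hInt
    · rw [h1, hEq, ih.2, Finset.prod_insert ha]

theorem diag_estimator_unbiased
    {M d : ℕ} (hM : 1 ≤ M) (hd : 1 ≤ d)
    (a : (Fin (M + 1) → Fin d) → ℝ)
    {Ω : Type*} [MeasureSpace Ω] [IsProbabilityMeasure (ℙ : Measure Ω)]
    (g : Fin M → Fin d → Ω → ℝ)
    (hmeas : ∀ n i, Measurable (g n i))
    (hindep : iIndepFun (fun p : Fin M × Fin d => g p.1 p.2) ℙ)
    (hident : ∀ n i n' i', IdentDistrib (g n i) (g n' i') ℙ ℙ)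
    (hmean : ∀ n i, ∫ ω, g n i ω ∂ℙ = 0)
    (hsecond : ∀ n i, ∫ ω, (g n i ω) ^ 2 ∂ℙ = 1)
    (hfourth : ∀ n i, Integrable (fun ω => (g n i ω) ^ 4) ℙ)
    (i : Fin d) :
    ∫ ω, diagEstimator a g i ω ∂ℙ = a (fun _ => i) := by
  classical
  -- integrability of low powers
  have hg2 : ∀ n k, Integrable (fun ω => (g n k ω) ^ 2) ℙ := by
    intro n k
    refine ((integrable_const (1:ℝ)).add (hfourth n k)).mono'
      ((hmeas n k).pow_const 2).aestronglyMeasurable (ae_of_all _ fun ω => ?_)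
    simp only [Pi.add_apply]
    rw [Real.norm_eq_abs, abs_of_nonneg (sq_nonneg _)]
    nlinarith [sq_nonneg ((g n k ω) ^ 2 - 1)]
  have hg1 : ∀ n k, Integrable (g n k) ℙ := by
    intro n k
    refine ((integrable_const (1:ℝ)).add (hg2 n k)).mono'
      (hmeas n k).aestronglyMeasurable (ae_of_all _ fun ω => ?_)
    simp only [Pi.add_apply]
    rw [Real.norm_eq_abs]
    nlinarith [sq_nonneg (|g n k ω| - 1), sq_abs (g n k ω), abs_nonneg (g n k ω)]
  have hgpow : ∀ n k (m : ℕ), m ≤ 2 → Integrable (fun ω => (g n k ω) ^ m) ℙ := by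
    intro n k m hm
    interval_cases m
    · simp
    · simpa using hg1 n k
    · exact hg2 n k
  -- the exponent family
  set e : (Fin M → Fin d) → Fin M × Fin d → ℕ :=
    fun j p => (if p.2 = j p.1 then 1 else 0) + (if p.2 = i then 1 else 0) with he
  have he2 : ∀ j p, e j p ≤ 2 := by
    intro j p; simp only [he]; split_ifs <;> norm_num
  set Y : (Fin M → Fin d) → Fin M × Fin d → Ω → ℝ :=
    fun j p ω => (g p.1 p.2 ω) ^ (e j p) with hY
  have hYmeas : ∀ j p, Measurable (Y j p) := fun j p => (hmeas p.1 p.2).pow_const _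
  have hYint : ∀ j p, Integrable (Y j p) ℙ := fun j p => hgpow p.1 p.2 _ (he2 j p)
  have hYindep : ∀ j, iIndepFun (Y j) ℙ := by
    intro j
    exact hindep.comp (fun p x => x ^ (e j p)) (fun p => measurable_id.pow_const _)
  -- rewrite each product as a product over all pairs
  have hprod : ∀ j ω, (∏ t : Fin M, g t (j t) ω * g t i ω) = ∏ p : Fin M × Fin d, Y j p ω := by
    intro j ω
    rw [Fintype.prod_prod_type]
    refine Finset.prod_congr rfl fun t _ => ?_
    simp only [hY, he, pow_add, Finset.prod_mul_distrib]
    congr 1 <;> simp [pow_ite, Finset.prod_ite_eq']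
  have hkey := fun j => indep_prod_integral (Y j) (hYindep j) (hYmeas j) (hYint j) Finset.univ
  -- integral of each Y j p
  have hYval : ∀ j p, ∫ ω, Y j p ω ∂ℙ =
      if (p.2 = j p.1 ∧ p.2 = i) then 1 else if (p.2 = j p.1 ∨ p.2 = i) then 0 else 1 := by
    intro j p
    simp only [hY, he]
    by_cases h1 : p.2 = j p.1 <;> by_cases h2 : p.2 = i
    · have hn : (if p.2 = j p.1 then 1 else 0) + (if p.2 = i then 1 else 0) = 2 := by
        rw [if_pos h1, if_pos h2]
      rw [hn, if_pos ⟨h1, h2⟩]; exact hsecond p.1 p.2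
    · have hn : (if p.2 = j p.1 then 1 else 0) + (if p.2 = i then 1 else 0) = 1 := by
        rw [if_pos h1, if_neg h2]
      rw [hn, if_neg (by tauto), if_pos (Or.inl h1)]
      simpa using hmean p.1 p.2
    · have hn : (if p.2 = j p.1 then 1 else 0) + (if p.2 = i then 1 else 0) = 1 := by
        rw [if_neg h1, if_pos h2]
      rw [hn, if_neg (by tauto), if_pos (Or.inr h2)]
      simpa using hmean p.1 p.2
    · have hn : (if p.2 = j p.1 then 1 else 0) + (if p.2 = i then 1 else 0) = 0 := by
        rw [if_neg h1, if_neg h2]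
      rw [hn, if_neg (by tauto), if_neg (by tauto)]
      simp
  -- value of the product of integrals
  have hprodval : ∀ j, (∏ p : Fin M × Fin d, ∫ ω, Y j p ω ∂ℙ)
      = if j = (fun _ => i) then 1 else 0 := by
    intro j
    by_cases hj : j = (fun _ => i)
    · subst hj
      rw [if_pos rfl]
      refine Finset.prod_eq_one fun p _ => ?_
      rw [hYval (fun _ => i) p]
      by_cases hp : p.2 = i <;> simp [hp]
    · rw [if_neg hj]
      obtain ⟨t0, ht0⟩ : ∃ t0, j t0 ≠ i := by
        by_contra hcon
        push_neg at hcon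
        exact hj (funext hcon)
      refine Finset.prod_eq_zero (Finset.mem_univ (t0, i)) ?_
      rw [hYval j (t0, i)]
      simp [Ne.symm ht0]
  -- put everything together
  have hterm : ∀ j : Fin M → Fin d,
      Integrable (fun ω => a (Fin.snoc j i) * ∏ t : Fin M, g t (j t) ω * g t i ω) ℙ := by
    intro j
    have := ((hkey j).1).const_mul (a (Fin.snoc j i))
    refine this.congr (ae_of_all _ fun ω => ?_)
    simp [hprod j ω]
  have hsnoc : (Fin.snoc (fun _ => i) i : Fin (M+1) → Fin d) = fun _ => i := by
    funext t
    refine Fin.lastCases ?_ ?_ t <;> simp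
  calc ∫ ω, diagEstimator a g i ω ∂ℙ
      = ∑ j : Fin M → Fin d, ∫ ω, a (Fin.snoc j i) * ∏ t : Fin M, g t (j t) ω * g t i ω ∂ℙ := by
        simp only [diagEstimator]
        exact integral_finset_sum _ fun j _ => hterm j
    _ = ∑ j : Fin M → Fin d, a (Fin.snoc j i) * if j = (fun _ => i) then 1 else 0 := by
        refine Finset.sum_congr rfl fun j _ => ?_
        rw [integral_const_mul]
        congr 1
        calc ∫ ω, ∏ t : Fin M, g t (j t) ω * g t i ω ∂ℙ
            = ∫ ω, ∏ p : Fin M × Fin d, Y j p ω ∂ℙ := by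
              refine integral_congr_ae (ae_of_all _ fun ω => ?_); exact hprod j ω
          _ = ∏ p : Fin M × Fin d, ∫ ω, Y j p ω ∂ℙ := (hkey j).2
          _ = if j = (fun _ => i) then 1 else 0 := hprodval j
    _ = a (fun _ => i) := by
        rw [Finset.sum_eq_single (fun _ => i : Fin M → Fin d)]
        · simp [hsnoc]
        · intro b _ hb; simp [hb]
        · intro h; exact absurd (Finset.mem_univ _) h
end

section
/- For every i ∈ {1,…,d}, the variance of the i-th entry of the diagonal estimator equals Var(y_i) = Σ_{s=0}^{N−1} (E[z⁴])^s · ( Σ a²_{j_1,…,j_{N−1},i} ) − a²_{i,…,i}, where for each s the inner sum ranges over all tuples (j_1,…,j_{N−1}) ∈ {1,…,d}^{N−1} in which exactly s of the indices j_1,…,j_{N−1} are equal to i, and z is a random variable with the common distribution of the entries g^{(n)}_i. -/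
open MeasureTheory ProbabilityTheory Finset
section DiagAux
variable {M d : ℕ} {Ω : Type*} [MeasureSpace Ω] [IsProbabilityMeasure (ℙ : Measure Ω)]
  (g : Fin M → Fin d → Ω → ℝ)

lemma diag_abs_le1 (z : ℝ) : |z| ≤ 1 + z ^ 4 := by
  rcases abs_cases z with ⟨h, _⟩ | ⟨h, _⟩ <;> nlinarith [sq_nonneg (z^2 - 1), sq_nonneg z, sq_nonneg (z - 1), sq_nonneg (z + 1), sq_nonneg (z^2 + z)]

lemma diag_abs_le2 (a b : ℝ) : |a * b| ≤ 1 + a ^ 4 + b ^ 4 := by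
  rw [abs_mul]
  nlinarith [sq_abs a, sq_abs b, abs_nonneg a, abs_nonneg b, sq_nonneg (|a| * |b| - 1),
    sq_nonneg (a ^ 2 - b ^ 2), mul_nonneg (abs_nonneg a) (abs_nonneg b)]

lemma diag_abs_le3 (a b c : ℝ) : |a * b * c ^ 2| ≤ 1 + a ^ 4 + b ^ 4 + c ^ 4 := by
  rw [abs_mul, abs_mul, abs_pow]
  nlinarith [sq_abs a, sq_abs b, sq_abs c, abs_nonneg a, abs_nonneg b, abs_nonneg c,
    sq_nonneg (|a| - |b|), sq_nonneg (a ^ 2 - c ^ 2), sq_nonneg (b ^ 2 - c ^ 2),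
    mul_nonneg (abs_nonneg a) (abs_nonneg b), sq_nonneg (|a| * |b| - c ^ 2),
    mul_nonneg (mul_nonneg (abs_nonneg a) (abs_nonneg b)) (sq_nonneg c)]

lemma diag_int1 (hmeas : ∀ n i, Measurable (g n i))
    (hfourth : ∀ n i, Integrable (fun ω => (g n i ω) ^ 4) ℙ) (n : Fin M) (x : Fin d) :
    Integrable (fun ω => g n x ω) ℙ := by
  refine Integrable.mono ((integrable_const (1:ℝ)).add (hfourth n x))
    (hmeas n x).aestronglyMeasurable (ae_of_all _ fun ω => ?_)
  simp only [Pi.add_apply, Real.norm_eq_abs]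
  exact le_trans (diag_abs_le1 _) (le_abs_self _)

lemma diag_int2 (hmeas : ∀ n i, Measurable (g n i))
    (hfourth : ∀ n i, Integrable (fun ω => (g n i ω) ^ 4) ℙ) (n : Fin M) (x y : Fin d) :
    Integrable (fun ω => g n x ω * g n y ω) ℙ := by
  refine Integrable.mono (((integrable_const (1:ℝ)).add (hfourth n x)).add (hfourth n y))
    ((hmeas n x).mul (hmeas n y)).aestronglyMeasurable (ae_of_all _ fun ω => ?_)
  simp only [Pi.add_apply, Real.norm_eq_abs]
  exact le_trans (diag_abs_le2 _ _) (le_abs_self _)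

lemma diag_int3 (hmeas : ∀ n i, Measurable (g n i))
    (hfourth : ∀ n i, Integrable (fun ω => (g n i ω) ^ 4) ℙ) (n : Fin M) (x y z : Fin d) :
    Integrable (fun ω => g n x ω * g n y ω * (g n z ω) ^ 2) ℙ := by
  refine Integrable.mono ((((integrable_const (1:ℝ)).add (hfourth n x)).add (hfourth n y)).add
    (hfourth n z))
    (((hmeas n x).mul (hmeas n y)).mul ((hmeas n z).pow_const 2)).aestronglyMeasurable
    (ae_of_all _ fun ω => ?_)
  simp only [Pi.add_apply, Real.norm_eq_abs]
  exact le_trans (diag_abs_le3 _ _ _) (le_abs_self _)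

variable (hmeas : ∀ n i, Measurable (g n i))
  (hindep : iIndepFun (fun p : Fin M × Fin d => g p.1 p.2) ℙ)
  (hmean : ∀ n i, ∫ ω, g n i ω ∂ℙ = 0)
  (hsecond : ∀ n i, ∫ ω, (g n i ω) ^ 2 ∂ℙ = 1)
  (hfourth : ∀ n i, Integrable (fun ω => (g n i ω) ^ 4) ℙ)
  (m4 : ℝ) (hm4 : ∀ n i, ∫ ω, (g n i ω) ^ 4 ∂ℙ = m4) (i : Fin d)

include hmeas hindep hmean hsecond in
lemma diag_E1 (n : Fin M) (x : Fin d) :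
    ∫ ω, g n x ω * g n i ω ∂ℙ = if x = i then 1 else 0 := by
  by_cases hx : x = i
  · subst hx
    rw [if_pos rfl, ← hsecond n x]
    exact integral_congr_ae (ae_of_all _ fun ω => (sq (g n x ω)).symm)
  · rw [if_neg hx]
    have hind : IndepFun (g n x) (g n i) ℙ :=
      hindep.indepFun (i := (n, x)) (j := (n, i)) (fun h => hx (congrArg Prod.snd h))
    rw [hind.integral_fun_mul_eq_mul_integral (hmeas n x).aestronglyMeasurable (hmeas n i).aestronglyMeasurable,
      hmean n x, zero_mul]

include hmeas hindep hmean hsecond hm4 in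
lemma diag_E2 (n : Fin M) (x y : Fin d) :
    ∫ ω, g n x ω * g n y ω * (g n i ω) ^ 2 ∂ℙ =
      if x = y then (if x = i then m4 else 1) else 0 := by
  by_cases hxy : x = y
  · subst hxy
    rw [if_pos rfl]
    by_cases hxi : x = i
    · subst hxi
      rw [if_pos rfl, ← hm4 n x]
      exact integral_congr_ae (ae_of_all _ fun ω => by ring)
    · rw [if_neg hxi]
      have hind : IndepFun (g n x) (g n i) ℙ :=
        hindep.indepFun (i := (n, x)) (j := (n, i)) (fun h => hxi (congrArg Prod.snd h))
      have hind2 : IndepFun (fun ω => (g n x ω) ^ 2) (fun ω => (g n i ω) ^ 2) ℙ :=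
        hind.comp (measurable_id.pow_const 2) (measurable_id.pow_const 2)
      have := hind2.integral_fun_mul_eq_mul_integral ((hmeas n x).pow_const 2).aestronglyMeasurable
        ((hmeas n i).pow_const 2).aestronglyMeasurable
      calc ∫ ω, g n x ω * g n x ω * (g n i ω) ^ 2 ∂ℙ
          = ∫ ω, (g n x ω) ^ 2 * (g n i ω) ^ 2 ∂ℙ :=
            integral_congr_ae (ae_of_all _ fun ω => by ring)
        _ = (∫ ω, (g n x ω) ^ 2 ∂ℙ) * ∫ ω, (g n i ω) ^ 2 ∂ℙ := this
        _ = 1 := by rw [hsecond, hsecond, one_mul]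
  · rw [if_neg hxy]
    -- pick u ∈ {x, y} with u ≠ i and the other index v
    obtain ⟨u, v, huv, hvu, hxyuv⟩ : ∃ u v : Fin d, u ≠ i ∧ v ≠ u ∧
        ∀ ω, g n x ω * g n y ω * (g n i ω) ^ 2 = g n v ω * (g n i ω) ^ 2 * g n u ω := by
      by_cases hxi : x = i
      · exact ⟨y, x, fun h => hxy (hxi.trans h.symm), fun h => hxy (h.symm ▸ rfl),
          fun ω => by ring⟩
      · exact ⟨x, y, hxi, fun h => hxy h.symm, fun ω => by ring⟩
    have hpair : IndepFun (fun a => (g n v a, g n i a)) (g n u) ℙ :=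
      hindep.indepFun_prodMk (fun p => hmeas p.1 p.2) (n, v) (n, i) (n, u)
        (fun h => hvu (congrArg Prod.snd h))
        (fun h => absurd (congrArg Prod.snd h).symm huv)
    have hind : IndepFun (fun ω => g n v ω * (g n i ω) ^ 2) (g n u) ℙ :=
      hpair.comp (measurable_fst.mul (measurable_snd.pow_const 2)) measurable_id
    calc ∫ ω, g n x ω * g n y ω * (g n i ω) ^ 2 ∂ℙ
        = ∫ ω, (g n v ω * (g n i ω) ^ 2) * g n u ω ∂ℙ :=
          integral_congr_ae (ae_of_all _ fun ω => hxyuv ω)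
      _ = (∫ ω, g n v ω * (g n i ω) ^ 2 ∂ℙ) * ∫ ω, g n u ω ∂ℙ :=
          hind.integral_fun_mul_eq_mul_integral ((hmeas n v).mul ((hmeas n i).pow_const 2)).aestronglyMeasurable
            (hmeas n u).aestronglyMeasurable
      _ = 0 := by rw [hmean n u, mul_zero]

end DiagAux
/-- Factorization of expectations over the independent blocks indexed by `t : Fin M`. -/
lemma diag_prod_integral_aux {M d : ℕ} {Ω : Type*} [MeasureSpace Ω]
    [IsProbabilityMeasure (ℙ : Measure Ω)]
    (g : Fin M → Fin d → Ω → ℝ)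
    (hmeas : ∀ n i, Measurable (g n i))
    (hindep : iIndepFun (fun p : Fin M × Fin d => g p.1 p.2) ℙ)
    (φ : Fin M → (Fin d → ℝ) → ℝ) (hφ : ∀ t, Measurable (φ t))
    (hint : ∀ t, Integrable (fun ω => φ t (fun x => g t x ω)) ℙ) :
    Integrable (fun ω => ∏ t, φ t (fun x => g t x ω)) ℙ ∧
      ∫ ω, ∏ t, φ t (fun x => g t x ω) ∂ℙ = ∏ t, ∫ ω, φ t (fun x => g t x ω) ∂ℙ := by
  suffices key : ∀ s : Finset (Fin M),
      Integrable (fun ω => ∏ t ∈ s, φ t (fun x => g t x ω)) ℙ ∧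
      ∫ ω, ∏ t ∈ s, φ t (fun x => g t x ω) ∂ℙ = ∏ t ∈ s, ∫ ω, φ t (fun x => g t x ω) ∂ℙ from
    key univ
  intro s
  induction s using Finset.cons_induction with
  | empty => simp
  | cons t₀ s hts ih =>
    obtain ⟨ihInt, ihEq⟩ := ih
    have hdisj : Disjoint ({t₀} ×ˢ (univ : Finset (Fin d))) (s ×ˢ univ) := by
      simp only [Finset.disjoint_left, Finset.mem_product, Finset.mem_singleton]
      rintro ⟨t, x⟩ ⟨rfl, -⟩ ⟨h2, -⟩
      exact hts h2
    have hI := hindep.indepFun_finset _ _ hdisj (fun p => hmeas p.1 p.2)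
    have hΦ : Measurable (fun v : (({t₀} ×ˢ (univ : Finset (Fin d)) : Finset (Fin M × Fin d))) → ℝ =>
        φ t₀ (fun x => v ⟨(t₀, x), Finset.mem_product.mpr ⟨Finset.mem_singleton_self _, Finset.mem_univ _⟩⟩)) :=
      (hφ t₀).comp (measurable_pi_lambda _ fun x => measurable_pi_apply _)
    have hΨ : Measurable (fun v : ((s ×ˢ (univ : Finset (Fin d)) : Finset (Fin M × Fin d))) → ℝ =>
        ∏ t ∈ s.attach, φ t.1 (fun x => v ⟨(t.1, x), Finset.mem_product.mpr ⟨t.2, Finset.mem_univ _⟩⟩)) :=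
      Finset.measurable_prod _ fun t _ => (hφ t.1).comp (measurable_pi_lambda _ fun x => measurable_pi_apply _)
    have hIndep2 : IndepFun (fun ω => φ t₀ (fun x => g t₀ x ω))
        (fun ω => ∏ t ∈ s, φ t (fun x => g t x ω)) ℙ := by
      have h := hI.comp hΦ hΨ
      have e2 : (fun v : ((s ×ˢ (univ : Finset (Fin d)) : Finset (Fin M × Fin d))) → ℝ =>
          ∏ t ∈ s.attach, φ t.1 (fun x => v ⟨(t.1, x), Finset.mem_product.mpr ⟨t.2, Finset.mem_univ _⟩⟩)) ∘
          (fun a (p : ((s ×ˢ (univ : Finset (Fin d)) : Finset (Fin M × Fin d)))) => g p.1.1 p.1.2 a) =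
          fun ω => ∏ t ∈ s, φ t (fun x => g t x ω) := by
        funext a
        simp only [Function.comp]
        exact Finset.prod_attach s (fun t => φ t (fun x => g t x a))
      rw [e2] at h
      exact h
    have hmul := hIndep2.integrable_mul (hint t₀) ihInt
    have heq := hIndep2.integral_fun_mul_eq_mul_integral (hint t₀).aestronglyMeasurable ihInt.aestronglyMeasurable
    constructor
    · simp only [Finset.prod_cons]
      exact hmul
    · simp only [Finset.prod_cons, ← ihEq]
      exact heq

theorem diag_estimator_variance
    {M d : ℕ} (hM : 1 ≤ M) (hd : 1 ≤ d)
    (a : (Fin (M + 1) → Fin d) → ℝ)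
    {Ω : Type*} [MeasureSpace Ω] [IsProbabilityMeasure (ℙ : Measure Ω)]
    (g : Fin M → Fin d → Ω → ℝ)
    (hmeas : ∀ n i, Measurable (g n i))
    (hindep : iIndepFun (fun p : Fin M × Fin d => g p.1 p.2) ℙ)
    (hident : ∀ n i n' i', IdentDistrib (g n i) (g n' i') ℙ ℙ)
    (hmean : ∀ n i, ∫ ω, g n i ω ∂ℙ = 0)
    (hsecond : ∀ n i, ∫ ω, (g n i ω) ^ 2 ∂ℙ = 1)
    (hfourth : ∀ n i, Integrable (fun ω => (g n i ω) ^ 4) ℙ)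
    (m4 : ℝ) (hm4 : ∀ n i, ∫ ω, (g n i ω) ^ 4 ∂ℙ = m4)
    (i : Fin d) :
    variance (diagEstimator a g i) ℙ =
      (∑ s ∈ Finset.range (M + 1), m4 ^ s *
        (∑ j ∈ Finset.univ.filter (fun j : Fin M → Fin d =>
          (Finset.univ.filter (fun t => j t = i)).card = s), (a (Fin.snoc j i)) ^ 2)) -
      (a (fun _ => i)) ^ 2 := by
  set X : (Fin M → Fin d) → Ω → ℝ := fun j ω => ∏ t, g t (j t) ω * g t i ω with hXdef
  -- mean of each summand
  have hXfact : ∀ j : Fin M → Fin d, Integrable (X j) ℙ ∧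
      ∫ ω, X j ω ∂ℙ = ∏ t, (if j t = i then (1 : ℝ) else 0) := by
    intro j
    have h := diag_prod_integral_aux g hmeas hindep (fun t v => v (j t) * v i)
      (fun t => (measurable_pi_apply _).mul (measurable_pi_apply _))
      (fun t => diag_int2 g hmeas hfourth t (j t) i)
    exact ⟨h.1, h.2.trans (Finset.prod_congr rfl fun t _ =>
      diag_E1 g hmeas hindep hmean hsecond i t (j t))⟩
  -- second moments of pairs of summands
  have hXXfact : ∀ j k : Fin M → Fin d, Integrable (fun ω => X j ω * X k ω) ℙ ∧
      ∫ ω, X j ω * X k ω ∂ℙ =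
        ∏ t, (if j t = k t then (if j t = i then m4 else 1) else 0) := by
    intro j k
    have h := diag_prod_integral_aux g hmeas hindep
      (fun t v => v (j t) * v (k t) * (v i) ^ 2)
      (fun t => Measurable.mul (Measurable.mul (measurable_pi_apply (j t))
        (measurable_pi_apply (k t))) ((measurable_pi_apply i).pow_const 2))
      (fun t => diag_int3 g hmeas hfourth t (j t) (k t) i)
    have hre : (fun ω => X j ω * X k ω) =
        fun ω => ∏ t, (g t (j t) ω * g t (k t) ω * (g t i ω) ^ 2) := by
      funext ω
      simp only [hXdef]
      rw [← Finset.prod_mul_distrib]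
      exact Finset.prod_congr rfl fun t _ => by ring
    refine ⟨hre ▸ h.1, ?_⟩
    rw [hre]
    exact h.2.trans (Finset.prod_congr rfl fun t _ =>
      diag_E2 g hmeas hindep hmean hsecond m4 hm4 i t (j t) (k t))
  have hyexp : diagEstimator a g i = fun ω => ∑ j : Fin M → Fin d, a (Fin.snoc j i) * X j ω := rfl
  have hsnoc : Fin.snoc (fun _ : Fin M => i) i = (fun _ : Fin (M + 1) => i) := by
    funext x
    induction x using Fin.lastCases with
    | last => simp
    | cast q => simp
  -- the mean
  have hEX : ∀ j : Fin M → Fin d, ∫ ω, X j ω ∂ℙ = if j = (fun _ => i) then 1 else 0 := by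
    intro j
    by_cases hj : j = fun _ => i
    · rw [if_pos hj, (hXfact j).2, Finset.prod_eq_one fun t _ => if_pos (by rw [hj])]
    · rw [if_neg hj, (hXfact j).2]
      obtain ⟨t, ht⟩ := Function.ne_iff.mp hj
      exact Finset.prod_eq_zero (Finset.mem_univ t) (if_neg ht)
  have hEy : ∫ ω, diagEstimator a g i ω ∂ℙ = a (fun _ => i) := by
    rw [hyexp, integral_finset_sum _ fun j _ => ((hXfact j).1.const_mul _)]
    simp_rw [integral_const_mul, hEX]
    simp only [mul_ite, mul_one, mul_zero, Finset.sum_ite_eq', Finset.mem_univ, if_true, hsnoc]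
  -- diagonal products
  have hprod_zero : ∀ j k : Fin M → Fin d, j ≠ k →
      (∏ t, (if j t = k t then (if j t = i then m4 else 1) else 0)) = 0 := by
    intro j k hjk
    obtain ⟨t, ht⟩ := Function.ne_iff.mp hjk
    exact Finset.prod_eq_zero (Finset.mem_univ t) (if_neg ht)
  have hprod_diag : ∀ j : Fin M → Fin d,
      (∏ t, (if j t = j t then (if j t = i then m4 else 1) else 0)) =
        m4 ^ (Finset.univ.filter (fun t => j t = i)).card := by
    intro j
    rw [Finset.prod_congr rfl fun t _ => if_pos rfl,
      Finset.prod_ite, Finset.prod_const, Finset.prod_const, one_pow, mul_one]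
  -- the second moment
  have hEy2 : ∫ ω, (diagEstimator a g i ω) ^ 2 ∂ℙ
      = ∑ j : Fin M → Fin d,
          (a (Fin.snoc j i)) ^ 2 * m4 ^ (Finset.univ.filter (fun t => j t = i)).card := by
    have hexp : ∀ ω, (diagEstimator a g i ω) ^ 2 =
        ∑ j : Fin M → Fin d, ∑ k : Fin M → Fin d,
          (a (Fin.snoc j i) * a (Fin.snoc k i)) * (X j ω * X k ω) := by
      intro ω
      rw [show diagEstimator a g i ω = ∑ j : Fin M → Fin d, a (Fin.snoc j i) * X j ω from rfl,
        sq, Finset.sum_mul_sum]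
      exact Finset.sum_congr rfl fun j _ => Finset.sum_congr rfl fun k _ => by ring
    have h1 : ∫ ω, (diagEstimator a g i ω) ^ 2 ∂ℙ
        = ∑ j : Fin M → Fin d, ∑ k : Fin M → Fin d,
            (a (Fin.snoc j i) * a (Fin.snoc k i)) * ∫ ω, X j ω * X k ω ∂ℙ := by
      rw [integral_congr_ae (ae_of_all _ hexp),
        integral_finset_sum _ (fun j _ =>
          integrable_finset_sum _ fun k _ => ((hXXfact j k).1.const_mul _))]
      refine Finset.sum_congr rfl fun j _ => ?_
      rw [integral_finset_sum _ (fun k _ => ((hXXfact j k).1.const_mul _))]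
      exact Finset.sum_congr rfl fun k _ => integral_const_mul _ _
    rw [h1]
    refine Finset.sum_congr rfl fun j _ => ?_
    rw [Finset.sum_eq_single_of_mem j (Finset.mem_univ j)
      (fun k _ hkj => by
        rw [(hXXfact j k).2, hprod_zero j k (fun h => hkj h.symm), mul_zero])]
    rw [(hXXfact j j).2, hprod_diag j, ← pow_two]
  -- regrouping by the number of indices equal to i
  have hregroup : ∑ j : Fin M → Fin d,
        (a (Fin.snoc j i)) ^ 2 * m4 ^ (Finset.univ.filter (fun t => j t = i)).card
      = ∑ s ∈ Finset.range (M + 1), m4 ^ s *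
          (∑ j ∈ Finset.univ.filter (fun j : Fin M → Fin d =>
            (Finset.univ.filter (fun t => j t = i)).card = s), (a (Fin.snoc j i)) ^ 2) := by
    rw [← Finset.sum_fiberwise_of_maps_to
      (g := fun j : Fin M → Fin d => (Finset.univ.filter (fun t => j t = i)).card)
      (fun j _ => Finset.mem_range.mpr (Nat.lt_succ_of_le
        (le_trans (Finset.card_filter_le _ _) (le_of_eq (Finset.card_fin M)))))
      (fun j => (a (Fin.snoc j i)) ^ 2 * m4 ^ (Finset.univ.filter (fun t => j t = i)).card)]
    refine Finset.sum_congr rfl fun s _ => ?_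
    rw [Finset.mul_sum]
    refine Finset.sum_congr rfl fun j hj => ?_
    rw [(Finset.mem_filter.mp hj).2]
    ring
  -- membership in L²
  have hXmeas : ∀ j : Fin M → Fin d, Measurable (X j) :=
    fun j => Finset.measurable_prod _ fun t _ => (hmeas t (j t)).mul (hmeas t i)
  have hXsq : ∀ j : Fin M → Fin d, Integrable (fun ω => (X j ω) ^ 2) ℙ :=
    fun j => ((hXXfact j j).1).congr (ae_of_all _ fun ω => (pow_two (X j ω)).symm)
  have hMem : MemLp (diagEstimator a g i) 2 ℙ := by
    rw [hyexp]
    exact memLp_finsetSum _ fun j _ =>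
      ((memLp_two_iff_integrable_sq (hXmeas j).aestronglyMeasurable).2 (hXsq j)).const_mul _
  rw [variance_eq_sub hMem]
  have hpow : ℙ[(diagEstimator a g i) ^ 2] = ∫ ω, (diagEstimator a g i ω) ^ 2 ∂ℙ := rfl
  rw [hpow, hEy2, hregroup, hEy]
end

section
/- For all p, q ∈ {1,…,d} with p ≠ q, the covariance of the p-th and q-th entries of the diagonal estimator equals Cov(y_p, y_q) = Σ a_{j_1,…,j_{N−1},p} · a_{k_1,…,k_{N−1},q} − a_{p,…,p} · a_{q,…,q}, where the sum ranges over all pairs of tuples (j_1,…,j_{N−1}) and (k_1,…,k_{N−1}) such that every j_t and every k_t lies in {p,q} and j_t ≠ k_t for all t ∈ {1,…,N−1}. -/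
open MeasureTheory ProbabilityTheory Finset

section Aux

variable {M d : ℕ} {Ω : Type*} [MeasureSpace Ω] [IsProbabilityMeasure (ℙ : Measure Ω)]

lemma aux_integrable_pow (g : Fin M → Fin d → Ω → ℝ)
    (hmeas : ∀ n i, Measurable (g n i))
    (hfourth : ∀ n i, Integrable (fun ω => (g n i ω) ^ 4) ℙ)
    (n : Fin M) (i : Fin d) (e : ℕ) (he : e ≤ 4) :
    Integrable (fun ω => (g n i ω) ^ e) ℙ := by
  refine Integrable.mono' ((integrable_const 1).add (hfourth n i))
    ((hmeas n i).pow_const e).aestronglyMeasurable (Filter.Eventually.of_forall fun ω => ?_)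
  set x := g n i ω with hx
  have h4 : (0:ℝ) ≤ x ^ 4 := by positivity
  simp only [Pi.add_apply, Real.norm_eq_abs]
  rcases le_or_gt (|x|) 1 with h | h
  · have : |x ^ e| ≤ 1 := by
      rw [abs_pow]; exact pow_le_one₀ (abs_nonneg x) h
    linarith
  · have h1 : |x ^ e| = |x| ^ e := abs_pow x e
    have h2 : |x| ^ e ≤ |x| ^ 4 := pow_le_pow_right₀ h.le he
    have h3 : |x| ^ 4 = x ^ 4 := by
      rw [pow_abs, abs_of_nonneg h4]
    linarith

lemma aux_key (g : Fin M → Fin d → Ω → ℝ)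
    (hmeas : ∀ n i, Measurable (g n i))
    (hindep : iIndepFun (fun p : Fin M × Fin d => g p.1 p.2) ℙ)
    (hfourth : ∀ n i, Integrable (fun ω => (g n i ω) ^ 4) ℙ)
    (e : Fin M × Fin d → ℕ) (he : ∀ tr, e tr ≤ 4) (s : Finset (Fin M × Fin d)) :
    Integrable (fun ω => ∏ tr ∈ s, (g tr.1 tr.2 ω) ^ e tr) ℙ ∧
    ∫ ω, ∏ tr ∈ s, (g tr.1 tr.2 ω) ^ e tr ∂ℙ
      = ∏ tr ∈ s, ∫ ω, (g tr.1 tr.2 ω) ^ e tr ∂ℙ := by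
  classical
  induction s using Finset.induction_on with
  | empty => simp
  | @insert b s ha ih =>
    have hdisj : Disjoint ({b} : Finset (Fin M × Fin d)) s := by
      simpa using ha
    have h0 := hindep.indepFun_finset {b} s hdisj (fun i => hmeas i.1 i.2)
    have hφ : Measurable (fun x : (↥({b} : Finset (Fin M × Fin d)) → ℝ) =>
        (x ⟨b, Finset.mem_singleton_self b⟩) ^ e b) :=
      (measurable_pi_apply _).pow_const _
    have hψ : Measurable (fun x : (↥s → ℝ) =>
        ∏ i ∈ s.attach, (x i) ^ e i.1) := by
      exact Finset.measurable_prod _ (fun i _ => (measurable_pi_apply _).pow_const _)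
    have hIndep := (h0.comp hφ hψ)
    have hY : (fun ω => ∏ tr ∈ s, (g tr.1 tr.2 ω) ^ e tr)
        = (fun x : (↥s → ℝ) => ∏ i ∈ s.attach, (x i) ^ e i.1)
          ∘ (fun ω (i : ↥s) => g (i : Fin M × Fin d).1 (i : Fin M × Fin d).2 ω) := by
      funext ω
      simp only [Function.comp]
      exact (Finset.prod_attach s fun tr => (g tr.1 tr.2 ω) ^ e tr).symm
    have hIndep' : IndepFun (fun ω => (g b.1 b.2 ω) ^ e b)
        (fun ω => ∏ tr ∈ s, (g tr.1 tr.2 ω) ^ e tr) ℙ := by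
      rw [hY]; exact hIndep
    have hXint : Integrable (fun ω => (g b.1 b.2 ω) ^ e b) ℙ :=
      aux_integrable_pow g hmeas hfourth b.1 b.2 (e b) (he b)
    constructor
    · have := hIndep'.integrable_mul hXint ih.1
      have heq : (fun ω => ∏ tr ∈ insert b s, (g tr.1 tr.2 ω) ^ e tr)
          = (fun ω => (g b.1 b.2 ω) ^ e b) * (fun ω => ∏ tr ∈ s, (g tr.1 tr.2 ω) ^ e tr) := by
        funext ω; simp [Finset.prod_insert ha]
      rw [heq]; exact this
    · have heq : ∀ ω, (∏ tr ∈ insert b s, (g tr.1 tr.2 ω) ^ e tr)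
          = (g b.1 b.2 ω) ^ e b * ∏ tr ∈ s, (g tr.1 tr.2 ω) ^ e tr := by
        intro ω; simp [Finset.prod_insert ha]
      simp_rw [heq]
      have hmul := hIndep'.integral_mul_eq_mul_integral hXint.1 ih.1.1
      exact hmul.trans (by rw [ih.2, Finset.prod_insert ha])

end Aux

/-- Exponent function: multiplicity of coordinate `tr` in the product
`∏ t, g t (j t) * g t i`. -/
def auxExp {M d : ℕ} (j : Fin M → Fin d) (i : Fin d) : Fin M × Fin d → ℕ :=
  fun tr => (if j tr.1 = tr.2 then 1 else 0) + (if i = tr.2 then 1 else 0)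

lemma auxExp_le {M d : ℕ} (j : Fin M → Fin d) (i : Fin d) (tr : Fin M × Fin d) :
    auxExp j i tr ≤ 2 := by
  unfold auxExp; split_ifs <;> norm_num

lemma aux_prod_rw {M d : ℕ} {Ω : Type*} (g : Fin M → Fin d → Ω → ℝ)
    (j : Fin M → Fin d) (i : Fin d) (ω : Ω) :
    (∏ t : Fin M, g t (j t) ω * g t i ω)
      = ∏ tr : Fin M × Fin d, (g tr.1 tr.2 ω) ^ (auxExp j i tr) := by
  rw [Fintype.prod_prod_type]
  refine Finset.prod_congr rfl fun t _ => ?_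
  simp only [auxExp, pow_add, Finset.prod_mul_distrib, pow_boole, Finset.prod_ite_eq,
    Finset.mem_univ, if_true]

lemma aux_snoc_const {M d : ℕ} (i : Fin d) :
    (Fin.snoc (fun _ : Fin M => i) i) = fun _ : Fin (M + 1) => i := by
  funext x
  induction x using Fin.lastCases <;> simp

theorem diag_estimator_covariance
    {M d : ℕ} (hM : 1 ≤ M) (hd : 1 ≤ d)
    (a : (Fin (M + 1) → Fin d) → ℝ)
    {Ω : Type*} [MeasureSpace Ω] [IsProbabilityMeasure (ℙ : Measure Ω)]
    (g : Fin M → Fin d → Ω → ℝ)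
    (hmeas : ∀ n i, Measurable (g n i))
    (hindep : iIndepFun (fun p : Fin M × Fin d => g p.1 p.2) ℙ)
    (hident : ∀ n i n' i', IdentDistrib (g n i) (g n' i') ℙ ℙ)
    (hmean : ∀ n i, ∫ ω, g n i ω ∂ℙ = 0)
    (hsecond : ∀ n i, ∫ ω, (g n i ω) ^ 2 ∂ℙ = 1)
    (hfourth : ∀ n i, Integrable (fun ω => (g n i ω) ^ 4) ℙ)
    (p q : Fin d) (hpq : p ≠ q) :
    (∫ ω, diagEstimator a g p ω * diagEstimator a g q ω ∂ℙ) -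
      (∫ ω, diagEstimator a g p ω ∂ℙ) * (∫ ω, diagEstimator a g q ω ∂ℙ) =
    (∑ jk ∈ Finset.univ.filter (fun jk : (Fin M → Fin d) × (Fin M → Fin d) =>
          ∀ t, (jk.1 t = p ∨ jk.1 t = q) ∧ (jk.2 t = p ∨ jk.2 t = q) ∧ jk.1 t ≠ jk.2 t),
        a (Fin.snoc jk.1 p) * a (Fin.snoc jk.2 q)) -
      a (fun _ => p) * a (fun _ => q) := by
  classical
  have hm0 : ∀ (n : Fin M) (i : Fin d), ∫ ω, (g n i ω) ^ 0 ∂ℙ = 1 := by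
    intro n i; simp
  have hm1 : ∀ (n : Fin M) (i : Fin d), ∫ ω, (g n i ω) ^ 1 ∂ℙ = 0 := by
    intro n i; simpa using hmean n i
  -- evaluation of the moment product for a single estimator term
  have hsingle : ∀ (j : Fin M → Fin d) (i : Fin d),
      (∏ tr : Fin M × Fin d, ∫ ω, (g tr.1 tr.2 ω) ^ (auxExp j i tr) ∂ℙ)
        = if j = fun _ => i then 1 else 0 := by
    intro j i
    by_cases hj : j = fun _ => i
    · rw [if_pos hj]
      refine Finset.prod_eq_one fun tr _ => ?_
      obtain ⟨t, r⟩ := tr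
      by_cases hir : i = r
      · have he : auxExp j i (t, r) = 2 := by simp [auxExp, hj, hir]
        rw [he]; exact hsecond t r
      · have he : auxExp j i (t, r) = 0 := by simp [auxExp, hj, hir]
        rw [he]; exact hm0 t r
    · rw [if_neg hj]
      have : ∃ t, j t ≠ i := by
        by_contra h; push_neg at h; exact hj (funext h)
      obtain ⟨t, ht⟩ := this
      refine Finset.prod_eq_zero (Finset.mem_univ (t, j t)) ?_
      have he : auxExp j i (t, j t) = 1 := by
        have : ¬ i = j t := fun h => ht h.symm
        simp [auxExp, this]
      rw [he]; exact hm1 t (j t)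
  -- evaluation of the moment product for a pair term
  have hpair : ∀ (j k : Fin M → Fin d),
      (∏ tr : Fin M × Fin d, ∫ ω, (g tr.1 tr.2 ω) ^ (auxExp j p tr + auxExp k q tr) ∂ℙ)
        = if (∀ t, (j t = p ∨ j t = q) ∧ (k t = p ∨ k t = q) ∧ j t ≠ k t) then 1 else 0 := by
    intro j k
    by_cases hc : ∀ t, (j t = p ∨ j t = q) ∧ (k t = p ∨ k t = q) ∧ j t ≠ k t
    · rw [if_pos hc]
      refine Finset.prod_eq_one fun tr _ => ?_
      obtain ⟨t, r⟩ := tr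
      obtain ⟨hj, hk, hne⟩ := hc t
      have hswap : (if j t = r then (1:ℕ) else 0) + (if k t = r then 1 else 0)
          = (if p = r then 1 else 0) + (if q = r then 1 else 0) := by
        rcases hj with h1 | h1
        · have h2 : k t = q := by
            rcases hk with h2 | h2
            · exact absurd (h1.trans h2.symm) hne
            · exact h2
          rw [h1, h2]
        · have h2 : k t = p := by
            rcases hk with h2 | h2
            · exact h2
            · exact absurd (h1.trans h2.symm) hne
          rw [h1, h2, add_comm]
      have hval : auxExp j p (t, r) + auxExp k q (t, r)
          = ((if p = r then 1 else 0) + (if q = r then 1 else 0))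
            + ((if p = r then 1 else 0) + (if q = r then 1 else 0)) := by
        simp only [auxExp]
        omega
      by_cases hp : p = r
      · have hq : ¬ q = r := fun h => hpq (hp.trans h.symm)
        have h2 : auxExp j p (t, r) + auxExp k q (t, r) = 2 := by
          rw [hval]; simp [hp, hq]
        rw [h2]; exact hsecond t r
      · by_cases hq : q = r
        · have h2 : auxExp j p (t, r) + auxExp k q (t, r) = 2 := by
            rw [hval]; simp [hp, hq]
          rw [h2]; exact hsecond t r
        · have h2 : auxExp j p (t, r) + auxExp k q (t, r) = 0 := by
            rw [hval]; simp [hp, hq]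
          rw [h2]; exact hm0 t r
    · rw [if_neg hc]
      push_neg at hc
      obtain ⟨t, ht⟩ := hc
      have hex : ∃ r : Fin d, auxExp j p (t, r) + auxExp k q (t, r) = 1 := by
        by_cases hα : j t = p ∨ j t = q
        · by_cases hβ : k t = p ∨ k t = q
          · have heq := ht hα hβ
            rcases hα with h1 | h1
            · refine ⟨q, ?_⟩
              have hkq : ¬ k t = q := by
                rw [← heq, h1]; exact hpq
              have hjq : ¬ j t = q := by rw [h1]; exact hpq
              have hpq' : ¬ p = q := hpq
              simp [auxExp, hkq, hjq, hpq']
            · refine ⟨p, ?_⟩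
              have hkp : ¬ k t = p := by
                rw [← heq, h1]; exact hpq.symm
              have hjp : ¬ j t = p := by rw [h1]; exact hpq.symm
              have hqp : ¬ q = p := fun h => hpq h.symm
              simp [auxExp, hkp, hjp, hqp]
          · push_neg at hβ
            refine ⟨k t, ?_⟩
            have hjk : ¬ j t = k t := by
              rcases hα with h1 | h1
              · rw [h1]; exact fun h => hβ.1 h.symm
              · rw [h1]; exact fun h => hβ.2 h.symm
            have hpk : ¬ p = k t := fun h => hβ.1 h.symm
            have hqk : ¬ q = k t := fun h => hβ.2 h.symm
            simp [auxExp, hjk, hpk, hqk]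
        · push_neg at hα
          by_cases hβ : k t = j t
          · refine ⟨p, ?_⟩
            have hjp : ¬ j t = p := hα.1
            have hkp : ¬ k t = p := by rw [hβ]; exact hα.1
            have hqp : ¬ q = p := fun h => hpq h.symm
            simp [auxExp, hjp, hkp, hqp]
          · refine ⟨j t, ?_⟩
            have hpj : ¬ p = j t := fun h => hα.1 h.symm
            have hqj : ¬ q = j t := fun h => hα.2 h.symm
            have hkj : ¬ k t = j t := hβ
            simp [auxExp, hpj, hqj, hkj]
      obtain ⟨r, hr⟩ := hex
      refine Finset.prod_eq_zero (Finset.mem_univ (t, r)) ?_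
      rw [hr]; exact hm1 t r
  -- expectation of a single estimator
  have hmean_est : ∀ i : Fin d, ∫ ω, diagEstimator a g i ω ∂ℙ = a (fun _ => i) := by
    intro i
    have hint : ∀ j : Fin M → Fin d,
        Integrable (fun ω => a (Fin.snoc j i) * ∏ t : Fin M, g t (j t) ω * g t i ω) ℙ := by
      intro j
      have h1 : (fun ω => a (Fin.snoc j i) * ∏ t : Fin M, g t (j t) ω * g t i ω)
          = fun ω => a (Fin.snoc j i) * ∏ tr : Fin M × Fin d, (g tr.1 tr.2 ω) ^ (auxExp j i tr) := by
        funext ω; rw [aux_prod_rw]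
      rw [h1]
      exact ((aux_key g hmeas hindep hfourth _
        (fun tr => le_trans (auxExp_le j i tr) (by norm_num)) Finset.univ).1).const_mul _
    simp only [diagEstimator]
    rw [integral_finset_sum _ fun j _ => hint j]
    have hterm : ∀ j : Fin M → Fin d,
        ∫ ω, a (Fin.snoc j i) * ∏ t : Fin M, g t (j t) ω * g t i ω ∂ℙ
          = a (Fin.snoc j i) * (if j = fun _ => i then 1 else 0) := by
      intro j
      simp_rw [aux_prod_rw g j i]
      rw [integral_const_mul _ _, (aux_key g hmeas hindep hfourth _
        (fun tr => le_trans (auxExp_le j i tr) (by norm_num)) Finset.univ).2, hsingle j i]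
    rw [Finset.sum_congr rfl fun j _ => hterm j]
    simp only [mul_ite, mul_one, mul_zero]
    rw [Finset.sum_ite_eq' Finset.univ (fun _ => i) (fun j => a (Fin.snoc j i))]
    simp [aux_snoc_const]
  -- expectation of the product
  have hprod_est : ∫ ω, diagEstimator a g p ω * diagEstimator a g q ω ∂ℙ
      = ∑ jk ∈ Finset.univ.filter (fun jk : (Fin M → Fin d) × (Fin M → Fin d) =>
            ∀ t, (jk.1 t = p ∨ jk.1 t = q) ∧ (jk.2 t = p ∨ jk.2 t = q) ∧ jk.1 t ≠ jk.2 t),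
          a (Fin.snoc jk.1 p) * a (Fin.snoc jk.2 q) := by
    have hE2le : ∀ (j k : Fin M → Fin d) (tr : Fin M × Fin d),
        auxExp j p tr + auxExp k q tr ≤ 4 := by
      intro j k tr
      have := auxExp_le j p tr
      have := auxExp_le k q tr
      omega
    have hprod : ∀ ω, diagEstimator a g p ω * diagEstimator a g q ω
        = ∑ jk : (Fin M → Fin d) × (Fin M → Fin d),
            (a (Fin.snoc jk.1 p) * a (Fin.snoc jk.2 q))
              * ∏ tr : Fin M × Fin d, (g tr.1 tr.2 ω) ^ (auxExp jk.1 p tr + auxExp jk.2 q tr) := by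
      intro ω
      simp only [diagEstimator]
      rw [Finset.sum_mul_sum, Fintype.sum_prod_type]
      refine Finset.sum_congr rfl fun j _ => Finset.sum_congr rfl fun k _ => ?_
      rw [aux_prod_rw g j p, aux_prod_rw g k q, mul_mul_mul_comm,
        ← Finset.prod_mul_distrib]
      simp_rw [← pow_add]
    simp_rw [hprod]
    rw [integral_finset_sum _ fun jk _ =>
      ((aux_key g hmeas hindep hfourth _ (hE2le jk.1 jk.2) Finset.univ).1).const_mul _]
    have hterm : ∀ jk : (Fin M → Fin d) × (Fin M → Fin d),
        ∫ ω, (a (Fin.snoc jk.1 p) * a (Fin.snoc jk.2 q))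
            * ∏ tr : Fin M × Fin d, (g tr.1 tr.2 ω) ^ (auxExp jk.1 p tr + auxExp jk.2 q tr) ∂ℙ
          = (a (Fin.snoc jk.1 p) * a (Fin.snoc jk.2 q))
              * (if (∀ t, (jk.1 t = p ∨ jk.1 t = q) ∧ (jk.2 t = p ∨ jk.2 t = q) ∧ jk.1 t ≠ jk.2 t)
                  then 1 else 0) := by
      intro jk
      rw [integral_const_mul _ _, (aux_key g hmeas hindep hfourth _
        (hE2le jk.1 jk.2) Finset.univ).2, hpair jk.1 jk.2]
    rw [Finset.sum_congr rfl fun jk _ => hterm jk]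
    rw [Finset.sum_filter]
    simp [mul_ite]
  rw [hprod_est, hmean_est p, hmean_est q]
end

section
/- If the entries g^{(n)}_i are i.i.d. Rademacher random variables (uniform on {−1,+1}), then for every i ∈ {1,…,d} the variance of the i-th entry of the diagonal estimator equals Var(y_i) = Σ_{(j_1,…,j_{N−1}) ∈ {1,…,d}^{N−1}} a²_{j_1,…,j_{N−1},i} − a²_{i,…,i}. -/
open MeasureTheory ProbabilityTheory Finset

/-- The Rademacher distribution: uniform on `{-1, +1}`. -/
noncomputable def radMeasure : Measure ℝ :=
  (2 : ENNReal)⁻¹ • Measure.dirac 1 + (2 : ENNReal)⁻¹ • Measure.dirac (-1)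

theorem diag_estimator_variance_rademacher
    {M d : ℕ} (hM : 1 ≤ M) (hd : 1 ≤ d)
    (a : (Fin (M + 1) → Fin d) → ℝ)
    {Ω : Type*} [MeasureSpace Ω] [IsProbabilityMeasure (ℙ : Measure Ω)]
    (g : Fin M → Fin d → Ω → ℝ)
    (hmeas : ∀ n i, Measurable (g n i))
    (hindep : iIndepFun (fun p : Fin M × Fin d => g p.1 p.2) ℙ)
    (hdist : ∀ n i, Measure.map (g n i) ℙ = radMeasure)
    (i : Fin d) :
    variance (diagEstimator a g i) ℙ =
      (∑ j : Fin M → Fin d, (a (Fin.snoc j i)) ^ 2) - (a (fun _ => i)) ^ 2 := by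
  classical
  set F : Fin M × Fin d → Ω → ℝ := fun p => g p.1 p.2 with hF
  set X : (Fin M → Fin d) → Ω → ℝ := fun j ω => ∏ t : Fin M, g t (j t) ω * g t i ω with hXdef
  set c : (Fin M → Fin d) → ℝ := fun j => a (Fin.snoc j i) with hc
  -- a.s. all squares are 1
  have hsq : ∀ᵐ ω ∂ℙ, ∀ (t : Fin M) (k : Fin d), g t k ω ^ 2 = 1 := by
    rw [ae_all_iff]; intro t; rw [ae_all_iff]; intro k
    have hs : MeasurableSet {x : ℝ | x ^ 2 ≠ 1} :=
      ((measurable_id.pow_const 2) (measurableSet_singleton 1)).compl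
    rw [ae_iff]
    have : {ω | ¬ g t k ω ^ 2 = 1} = g t k ⁻¹' {x : ℝ | x ^ 2 ≠ 1} := rfl
    rw [this, ← Measure.map_apply (hmeas t k) hs, hdist, radMeasure]
    simp [Measure.dirac_apply' _ hs, Set.indicator]
  -- expectation of each g is 0
  have hEg : ∀ (t : Fin M) (k : Fin d), ∫ ω, g t k ω ∂ℙ = 0 := by
    intro t k
    have : ∫ ω, g t k ω ∂ℙ = ∫ x, x ∂(Measure.map (g t k) ℙ) :=
      (integral_map (hmeas t k).aemeasurable measurable_id.aestronglyMeasurable).symm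
    rw [this, hdist]
    have h1 : ∀ y : ℝ, Integrable (fun x : ℝ => x) ((2 : ENNReal)⁻¹ • Measure.dirac y) :=
      fun y => ((integrable_const y).congr (ae_eq_dirac (fun x : ℝ => x)).symm).smul_measure
        (by norm_num)
    rw [radMeasure, integral_add_measure (h1 1) (h1 (-1)), integral_smul_measure,
      integral_smul_measure, integral_dirac, integral_dirac]
    norm_num
  -- integrability of products
  have hprodInt : ∀ s : Finset (Fin M × Fin d),
      Integrable (fun ω => ∏ p ∈ s, F p ω) ℙ := by
    intro s
    refine (integrable_const (1 : ℝ)).mono'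
      (Finset.measurable_prod s (fun p _ => hmeas p.1 p.2)).aestronglyMeasurable ?_
    filter_upwards [hsq] with ω hω
    have : ∀ p ∈ s, |F p ω| = 1 := by
      intro p _
      rcases sq_eq_one_iff.mp (hω p.1 p.2) with h | h <;> simp [hF, h]
    rw [Real.norm_eq_abs, Finset.abs_prod, Finset.prod_congr rfl this, Finset.prod_const_one]
  -- expectation of products over finsets factorizes
  have hprodE : ∀ s : Finset (Fin M × Fin d),
      ∫ ω, ∏ p ∈ s, F p ω ∂ℙ = ∏ p ∈ s, ∫ ω, F p ω ∂ℙ := by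
    intro s
    induction s using Finset.induction with
    | empty => simp
    | @insert q s hq ih =>
      have heq0 : (∏ p ∈ s, F p) = fun ω => ∏ p ∈ s, F p ω := by
        funext ω; simp [Finset.prod_apply]
      have hip : IndepFun (∏ p ∈ s, F p) (F q) ℙ :=
        hindep.indepFun_finset_prod_of_notMem (fun p => hmeas p.1 p.2) hq
      have hm1 : AEStronglyMeasurable (∏ p ∈ s, F p) ℙ := by
        rw [heq0]
        exact (Finset.measurable_prod s (fun p _ => hmeas p.1 p.2)).aestronglyMeasurable
      have hmul := IndepFun.integral_mul_eq_mul_integral hip hm1 (hmeas q.1 q.2).aestronglyMeasurable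
      simp_rw [Finset.prod_insert hq]
      have hstep : ∫ ω, F q ω * ∏ p ∈ s, F p ω ∂ℙ
          = ∫ ω, ((∏ p ∈ s, F p) * F q) ω ∂ℙ := by
        refine integral_congr_ae (Filter.Eventually.of_forall fun ω => ?_)
        simp [heq0, mul_comm]
      rw [hstep]
      rw [show ∫ ω, ((∏ p ∈ s, F p) * F q) ω ∂ℙ = integral ℙ ((∏ p ∈ s, F p) * F q) from rfl,
        hmul, heq0, ih, mul_comm]
  -- the index set D
  set D : (Fin M → Fin d) → (Fin M → Fin d) → Finset (Fin M × Fin d) :=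
    fun j k => Finset.univ.biUnion
      (fun t : Fin M => if j t = k t then ∅ else {(t, j t), (t, k t)}) with hD
  have hfst : ∀ (j k : Fin M → Fin d) (t : Fin M) (p : Fin M × Fin d),
      p ∈ (if j t = k t then (∅ : Finset (Fin M × Fin d)) else {(t, j t), (t, k t)}) →
      p.1 = t := by
    intro j k t p hp
    by_cases h : j t = k t
    · simp [h] at hp
    · simp [h] at hp
      rcases hp with rfl | rfl <;> rfl
  -- a.s. product identity
  have hPeq : ∀ j k : Fin M → Fin d, ∀ᵐ ω ∂ℙ,
      (∏ t : Fin M, g t (j t) ω * g t (k t) ω) = ∏ p ∈ D j k, F p ω := by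
    intro j k
    filter_upwards [hsq] with ω hω
    have hstep : ∀ t : Fin M, g t (j t) ω * g t (k t) ω =
        ∏ p ∈ (if j t = k t then (∅ : Finset (Fin M × Fin d)) else {(t, j t), (t, k t)}),
          F p ω := by
      intro t
      by_cases h : j t = k t
      · rw [if_pos h, Finset.prod_empty, h, ← sq]; exact hω t (k t)
      · rw [if_neg h, Finset.prod_pair (by simp [h])]
    have hdisj : Set.PairwiseDisjoint (↑(Finset.univ : Finset (Fin M)))
        (fun t : Fin M => if j t = k t then (∅ : Finset (Fin M × Fin d))
          else {(t, j t), (t, k t)}) := by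
      intro t1 _ t2 _ hne
      refine Finset.disjoint_left.mpr ?_
      intro p hp1 hp2
      exact hne ((hfst j k t1 p hp1) ▸ (hfst j k t2 p hp2) ▸ rfl)
    calc (∏ t : Fin M, g t (j t) ω * g t (k t) ω)
        = ∏ t : Fin M, ∏ p ∈ (if j t = k t then (∅ : Finset (Fin M × Fin d))
            else {(t, j t), (t, k t)}), F p ω := Finset.prod_congr rfl fun t _ => hstep t
      _ = ∏ p ∈ D j k, F p ω := (Finset.prod_biUnion hdisj).symm
  -- a.s.: X j * X k = plain product
  have hXX : ∀ j k : Fin M → Fin d, ∀ᵐ ω ∂ℙ,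
      X j ω * X k ω = ∏ t : Fin M, g t (j t) ω * g t (k t) ω := by
    intro j k
    filter_upwards [hsq] with ω hω
    rw [hXdef]
    simp only
    rw [← Finset.prod_mul_distrib]
    refine Finset.prod_congr rfl fun t _ => ?_
    have h1 : g t (j t) ω * g t i ω * (g t (k t) ω * g t i ω)
        = g t (j t) ω * g t (k t) ω * (g t i ω) ^ 2 := by ring
    rw [h1, hω t i, mul_one]
  -- product over D of expectations
  have hDE : ∀ j k : Fin M → Fin d,
      (∏ p ∈ D j k, ∫ ω, F p ω ∂ℙ) = if j = k then 1 else 0 := by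
    intro j k
    by_cases h : j = k
    · subst h; rw [if_pos rfl]
      have : D j j = ∅ := by ext p; simp [hD]
      rw [this, Finset.prod_empty]
    · rw [if_neg h]
      obtain ⟨t, ht⟩ : ∃ t, j t ≠ k t := by
        by_contra hcon; push_neg at hcon; exact h (funext hcon)
      have hmem : (t, j t) ∈ D j k := by
        rw [hD]; refine Finset.mem_biUnion.mpr ⟨t, Finset.mem_univ t, ?_⟩
        rw [if_neg ht]; exact Finset.mem_insert_self _ _
      exact Finset.prod_eq_zero hmem (hEg t (j t))
  -- expectations
  have hEXX : ∀ j k : Fin M → Fin d,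
      ∫ ω, X j ω * X k ω ∂ℙ = if j = k then 1 else 0 := by
    intro j k
    have hae : ∀ᵐ ω ∂ℙ, X j ω * X k ω = ∏ p ∈ D j k, F p ω := by
      filter_upwards [hXX j k, hPeq j k] with ω h1 h2; rw [h1, h2]
    rw [integral_congr_ae hae, hprodE, hDE]
  have hEX : ∀ j : Fin M → Fin d,
      ∫ ω, X j ω ∂ℙ = if j = (fun _ => i) then 1 else 0 := by
    intro j
    have hae : ∀ᵐ ω ∂ℙ, X j ω = ∏ p ∈ D j (fun _ => i), F p ω := hPeq j (fun _ => i)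
    rw [integral_congr_ae hae, hprodE, hDE]
  -- integrability of X and products
  have hIntX : ∀ j : Fin M → Fin d, Integrable (X j) ℙ := by
    intro j
    refine (hprodInt (D j (fun _ => i))).congr ?_
    filter_upwards [hPeq j (fun _ => i)] with ω hω
    exact hω.symm
  have hIntXX : ∀ j k : Fin M → Fin d, Integrable (fun ω => X j ω * X k ω) ℙ := by
    intro j k
    refine (hprodInt (D j k)).congr ?_
    filter_upwards [hXX j k, hPeq j k] with ω h1 h2
    rw [← h2, ← h1]
  -- Y and its moments
  set Y : Ω → ℝ := diagEstimator a g i with hY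
  have hYeq : ∀ ω, Y ω = ∑ j : Fin M → Fin d, c j * X j ω := fun ω => rfl
  have hmean : ∫ ω, Y ω ∂ℙ = c (fun _ => i) := by
    simp_rw [hYeq]
    rw [integral_finset_sum _ (fun j _ => (hIntX j).const_mul (c j))]
    simp_rw [integral_const_mul, hEX]
    simp
  have hsec : ∫ ω, Y ω ^ 2 ∂ℙ = ∑ j : Fin M → Fin d, c j ^ 2 := by
    have hexp : ∀ ω, Y ω ^ 2 = ∑ j : Fin M → Fin d, ∑ k : Fin M → Fin d,
        c j * c k * (X j ω * X k ω) := by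
      intro ω
      rw [hYeq, sq, Finset.sum_mul_sum]
      exact Finset.sum_congr rfl fun j _ => Finset.sum_congr rfl fun k _ => by ring
    simp_rw [hexp]
    rw [integral_finset_sum _ (fun j _ => integrable_finset_sum _
      (fun k _ => (hIntXX j k).const_mul (c j * c k)))]
    have : ∀ j : Fin M → Fin d, ∫ ω, ∑ k : Fin M → Fin d, c j * c k * (X j ω * X k ω) ∂ℙ
        = c j ^ 2 := by
      intro j
      rw [integral_finset_sum _ (fun k _ => (hIntXX j k).const_mul (c j * c k))]
      simp_rw [integral_const_mul, hEXX]
      simp [sq]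
    exact Finset.sum_congr rfl fun j _ => this j
  -- Memℒp 2
  have hYmeas : Measurable Y := by
    apply Finset.measurable_sum
    intro j _
    exact (Finset.measurable_prod _ (fun t _ => (hmeas t (j t)).mul (hmeas t i))).const_mul _
  have hMem : MemLp Y 2 ℙ := by
    refine (memLp_top_of_bound hYmeas.aestronglyMeasurable
      (∑ j : Fin M → Fin d, |c j|) ?_).mono_exponent le_top
    filter_upwards [hsq] with ω hω
    rw [hYeq, Real.norm_eq_abs]
    refine (Finset.abs_sum_le_sum_abs _ _).trans (le_of_eq ?_)
    refine Finset.sum_congr rfl fun j _ => ?_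
    have : |X j ω| = 1 := by
      rw [hXdef]; simp only
      rw [Finset.abs_prod, Finset.prod_congr rfl (fun t _ => ?_), Finset.prod_const_one]
      rw [abs_mul]
      rcases sq_eq_one_iff.mp (hω t (j t)) with h | h <;>
        rcases sq_eq_one_iff.mp (hω t i) with h' | h' <;> simp [h, h']
    rw [abs_mul, this, mul_one]
  rw [variance_eq_sub hMem]
  have h2 : (ℙ : Measure Ω)[Y ^ 2] = ∑ j : Fin M → Fin d, c j ^ 2 := by
    rw [← hsec]; congr 1
  have h1 : (ℙ : Measure Ω)[Y] = c (fun _ => i) := hmean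
  have hsnoc : c (fun _ => i) = a (fun _ => i) := by
    show a (Fin.snoc (fun _ => i) i) = a (fun _ => i)
    congr 1
    funext t
    simp [Fin.snoc]
  rw [h1, h2, hsnoc]
end

section
/- If the entries g^{(n)}_i are i.i.d. standard Gaussian N(0,1), then for every i ∈ {1,…,d} the variance of the i-th entry of the diagonal estimator equals Var(y_i) = Σ_{s=0}^{N−1} 3^s · ( Σ a²_{j_1,…,j_{N−1},i} ) − a²_{i,…,i}, where for each s the inner sum ranges over all tuples (j_1,…,j_{N−1}) ∈ {1,…,d}^{N−1} in which exactly s of the indices j_1,…,j_{N−1} are equal to i. -/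
open MeasureTheory ProbabilityTheory Finset Real
open scoped NNReal ENNReal
set_option linter.unusedSectionVars false
set_option maxHeartbeats 1000000

noncomputable def stdMoment (k : ℕ) : ℝ := ∫ x, x ^ k ∂(gaussianReal 0 1)

lemma gaussianPDFReal_zero_one (x : ℝ) :
    gaussianPDFReal 0 1 x = (√(2 * π))⁻¹ * rexp (-(2:ℝ)⁻¹ * x ^ 2) := by
  rw [gaussianPDFReal]
  push_cast
  rw [mul_one, sub_zero]
  ring_nf

lemma integrable_pow_mul_gaussian (k : ℕ) :
    Integrable (fun x : ℝ => x ^ k * rexp (-(2:ℝ)⁻¹ * x ^ 2)) := by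
  have := integrable_rpow_mul_exp_neg_mul_sq (b := (2:ℝ)⁻¹) (by norm_num) (s := (k : ℝ))
    (lt_of_lt_of_le neg_one_lt_zero (Nat.cast_nonneg k))
  simpa [Real.rpow_natCast] using this

lemma integrable_pow_gaussianReal (k : ℕ) :
    Integrable (fun x : ℝ => x ^ k) (gaussianReal 0 1) := by
  rw [gaussianReal_of_var_ne_zero _ one_ne_zero]
  have hmeas : Measurable fun x => (gaussianPDFReal 0 1 x).toNNReal :=
    (measurable_gaussianPDFReal 0 1).real_toNNReal
  have : (gaussianPDF 0 1) = fun x => ((gaussianPDFReal 0 1 x).toNNReal : ℝ≥0∞) := by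
    ext x; simp [gaussianPDF, ENNReal.ofReal]
  rw [this, integrable_withDensity_iff_integrable_smul hmeas]
  have : (fun x : ℝ => (gaussianPDFReal 0 1 x).toNNReal • x ^ k)
      = fun x : ℝ => (√(2 * π))⁻¹ * (x ^ k * rexp (-(2:ℝ)⁻¹ * x ^ 2)) := by
    ext x
    rw [NNReal.smul_def, smul_eq_mul, Real.coe_toNNReal _ (gaussianPDFReal_nonneg 0 1 x),
      gaussianPDFReal_zero_one]
    ring
  rw [this]
  exact (integrable_pow_mul_gaussian k).const_mul _

lemma stdMoment_eq (k : ℕ) :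
    stdMoment k = (√(2 * π))⁻¹ * ∫ x : ℝ, x ^ k * rexp (-(2:ℝ)⁻¹ * x ^ 2) := by
  rw [stdMoment, gaussianReal_of_var_ne_zero _ one_ne_zero]
  have hmeas : Measurable fun x => (gaussianPDFReal 0 1 x).toNNReal :=
    (measurable_gaussianPDFReal 0 1).real_toNNReal
  have h1 : (gaussianPDF 0 1) = fun x => ((gaussianPDFReal 0 1 x).toNNReal : ℝ≥0∞) := by
    ext x; simp [gaussianPDF, ENNReal.ofReal]
  rw [h1, integral_withDensity_eq_integral_smul hmeas]
  rw [← integral_const_mul]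
  congr 1; ext x
  rw [NNReal.smul_def, smul_eq_mul, Real.coe_toNNReal _ (gaussianPDFReal_nonneg 0 1 x),
    gaussianPDFReal_zero_one]
  ring

lemma gauss_integral_odd {k : ℕ} (hk : Odd k) :
    ∫ x : ℝ, x ^ k * rexp (-(2:ℝ)⁻¹ * x ^ 2) = 0 := by
  have h := (Measure.measurePreserving_neg (volume : Measure ℝ)).integral_comp
    (Homeomorph.neg ℝ).measurableEmbedding (fun x : ℝ => x ^ k * rexp (-(2:ℝ)⁻¹ * x ^ 2))
  have h2 : ∀ x : ℝ, (-x) ^ k * rexp (-(2:ℝ)⁻¹ * (-x) ^ 2)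
      = -(x ^ k * rexp (-(2:ℝ)⁻¹ * x ^ 2)) := by
    intro x
    rw [hk.neg_pow, neg_sq, neg_mul]
  simp only [h2, integral_neg] at h
  linarith

lemma gauss_integral_Ioi (k : ℕ) :
    ∫ x : ℝ in Set.Ioi 0, x ^ k * rexp (-(2:ℝ)⁻¹ * x ^ 2)
      = (2:ℝ)⁻¹ ^ (-((k:ℝ) + 1) / 2) * (1 / 2) * Real.Gamma (((k:ℝ) + 1) / 2) := by
  have h := integral_rpow_mul_exp_neg_mul_rpow (p := 2) (q := (k:ℝ)) (b := (2:ℝ)⁻¹)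
    (by norm_num) (lt_of_lt_of_le neg_one_lt_zero (Nat.cast_nonneg k)) (by norm_num)
  rw [← h]
  refine setIntegral_congr_fun measurableSet_Ioi (fun x hx => ?_)
  rw [Real.rpow_natCast, show ((2:ℝ)) = ((2:ℕ):ℝ) by norm_num, Real.rpow_natCast]

lemma integral_even_two (f : ℝ → ℝ) (hint : Integrable f) (heven : ∀ x, f (-x) = f x) :
    ∫ x : ℝ, f x = 2 * ∫ x in Set.Ioi 0, f x := by
  rw [← intervalIntegral.integral_Iic_add_Ioi hint.integrableOn hint.integrableOn]
  have : (∫ x in Set.Iic (0:ℝ), f x) = ∫ x in Set.Ioi (0:ℝ), f x := by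
    have h := integral_comp_neg_Iic (0:ℝ) f
    rw [neg_zero] at h
    rw [← h]
    simp_rw [heven]
  rw [this]; ring

lemma rpow_half_aux (y : ℝ) (n : ℕ) (h : y = (n : ℝ) + 1/2) :
    ((2:ℝ)⁻¹) ^ (-y) = 2 ^ n * Real.sqrt 2 := by
  rw [Real.rpow_neg (by norm_num), Real.inv_rpow (by norm_num), inv_inv, h,
    Real.rpow_add (by norm_num), Real.rpow_natCast, ← Real.sqrt_eq_rpow]

lemma stdMoment_two : stdMoment 2 = 1 := by
  have h1 : ∫ x : ℝ, x ^ 2 * rexp (-(2:ℝ)⁻¹ * x ^ 2) = Real.sqrt (2 * Real.pi) := by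
    rw [integral_even_two _ (integrable_pow_mul_gaussian 2)
        (fun x => by rw [neg_pow, neg_sq]; ring_nf),
      gauss_integral_Ioi 2]
    have e1 : (-(((2:ℕ):ℝ) + 1) / 2) = -(1 + 1/2 : ℝ) := by push_cast; norm_num
    have e2 : ((((2:ℕ):ℝ) + 1) / 2) = 1/2 + 1 := by push_cast; norm_num
    rw [e1, e2, rpow_half_aux _ 1 (by norm_num), Real.Gamma_add_one (by norm_num),
      Real.Gamma_one_half_eq, Real.sqrt_mul (by norm_num)]
    ring
  rw [stdMoment_eq, h1, inv_mul_cancel₀]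
  positivity

lemma stdMoment_four : stdMoment 4 = 3 := by
  have h1 : ∫ x : ℝ, x ^ 4 * rexp (-(2:ℝ)⁻¹ * x ^ 2) = 3 * Real.sqrt (2 * Real.pi) := by
    rw [integral_even_two _ (integrable_pow_mul_gaussian 4)
        (fun x => by rw [neg_pow, neg_sq]; ring_nf),
      gauss_integral_Ioi 4]
    have e1 : (-(((4:ℕ):ℝ) + 1) / 2) = -(2 + 1/2 : ℝ) := by push_cast; norm_num
    have e2 : ((((4:ℕ):ℝ) + 1) / 2) = (1/2 + 1) + 1 := by push_cast; norm_num
    rw [e1, e2, rpow_half_aux _ 2 (by norm_num), Real.Gamma_add_one (by norm_num),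
      Real.Gamma_add_one (by norm_num), Real.Gamma_one_half_eq,
      Real.sqrt_mul (by norm_num : (0:ℝ) ≤ 2)]
    ring
  rw [stdMoment_eq, h1, mul_comm (3:ℝ), ← mul_assoc, inv_mul_cancel₀ (by positivity), one_mul]

lemma stdMoment_zero : stdMoment 0 = 1 := by
  simp [stdMoment]

lemma stdMoment_one : stdMoment 1 = 0 := by
  rw [stdMoment_eq, gauss_integral_odd odd_one, mul_zero]

lemma stdMoment_three : stdMoment 3 = 0 := by
  rw [stdMoment_eq, gauss_integral_odd (by decide), mul_zero]

section Indep
variable {ι : Type*} {Ω : Type*} [MeasureSpace Ω] [IsProbabilityMeasure (ℙ : Measure Ω)]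

lemma integral_finset_prod_of_iIndepFun (X : ι → Ω → ℝ)
    (hmeas : ∀ p, Measurable (X p))
    (hindep : iIndepFun X ℙ)
    (hint : ∀ p, Integrable (X p) ℙ) (s : Finset ι) :
    Integrable (fun ω => ∏ p ∈ s, X p ω) ℙ ∧
      (∫ ω, ∏ p ∈ s, X p ω ∂ℙ) = ∏ p ∈ s, ∫ ω, X p ω ∂ℙ := by
  classical
  induction s using Finset.induction with
  | empty => simp
  | @insert i s hi ih =>
    have hind : IndepFun (∏ j ∈ s, X j) (X i) ℙ :=
      hindep.indepFun_finset_prod_of_notMem hmeas hi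
    have hprodeq : (∏ j ∈ s, X j) = fun ω => ∏ j ∈ s, X j ω := by
      ext ω; simp [Finset.prod_apply]
    rw [hprodeq] at hind
    have hint2 : Integrable (fun ω => (∏ j ∈ s, X j ω) * X i ω) ℙ :=
      hind.integrable_mul ih.1 (hint i)
    have hieq : (∫ ω, (∏ j ∈ s, X j ω) * X i ω ∂ℙ)
        = (∫ ω, ∏ j ∈ s, X j ω ∂ℙ) * ∫ ω, X i ω ∂ℙ :=
      hind.integral_fun_mul_eq_mul_integral ih.1.aestronglyMeasurable (hint i).aestronglyMeasurable
    constructor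
    · simpa only [Finset.prod_insert hi, mul_comm] using hint2
    · rw [Finset.prod_insert hi]
      simp_rw [Finset.prod_insert hi, mul_comm (X i _)]
      rw [hieq, ih.2, mul_comm]
end Indep

section Main
variable {M d : ℕ} {Ω : Type*} [MeasureSpace Ω] [IsProbabilityMeasure (ℙ : Measure Ω)]
  (g : Fin M → Fin d → Ω → ℝ)
  (hmeas : ∀ n i, Measurable (g n i))
  (hindep : iIndepFun (fun p : Fin M × Fin d => g p.1 p.2) ℙ)
  (hdist : ∀ n i, Measure.map (g n i) ℙ = gaussianReal 0 1)

include hmeas hdist in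
lemma integrable_pow_g (p : Fin M × Fin d) (k : ℕ) :
    Integrable (fun ω => g p.1 p.2 ω ^ k) ℙ := by
  have h := integrable_pow_gaussianReal k
  rw [← hdist p.1 p.2] at h
  rw [integrable_map_measure (by fun_prop) (hmeas p.1 p.2).aemeasurable] at h
  exact h

include hmeas hdist in
lemma integral_pow_g (p : Fin M × Fin d) (k : ℕ) :
    (∫ ω, g p.1 p.2 ω ^ k ∂ℙ) = stdMoment k := by
  rw [stdMoment, ← hdist p.1 p.2, integral_map (hmeas p.1 p.2).aemeasurable (by fun_prop)]

include hmeas hindep hdist in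
lemma E_prod_pow (e : Fin M × Fin d → ℕ) :
    Integrable (fun ω => ∏ p : Fin M × Fin d, g p.1 p.2 ω ^ e p) ℙ ∧
      (∫ ω, ∏ p : Fin M × Fin d, g p.1 p.2 ω ^ e p ∂ℙ)
        = ∏ p : Fin M × Fin d, stdMoment (e p) := by
  have hindep2 : iIndepFun
      (fun (p : Fin M × Fin d) ω => g p.1 p.2 ω ^ e p) ℙ :=
    hindep.comp (fun p (x : ℝ) => x ^ e p) (fun p => measurable_id.pow_const (e p))
  have h := integral_finset_prod_of_iIndepFun (fun p ω => g p.1 p.2 ω ^ e p)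
    (fun p => (hmeas p.1 p.2).pow_const (e p)) hindep2
    (fun p => integrable_pow_g g hmeas hdist p (e p)) Finset.univ
  refine ⟨h.1, ?_⟩
  rw [h.2]
  exact Finset.prod_congr rfl fun p _ => integral_pow_g g hmeas hdist p (e p)

variable (i : Fin d)

def eJ (i : Fin d) (j : Fin M → Fin d) : Fin M × Fin d → ℕ :=
  fun p => (if j p.1 = p.2 then 1 else 0) + (if i = p.2 then 1 else 0)

lemma X_eq (j : Fin M → Fin d) (ω : Ω) :
    (∏ t : Fin M, g t (j t) ω * g t i ω)
      = ∏ p : Fin M × Fin d, g p.1 p.2 ω ^ (eJ i j p) := by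
  rw [Fintype.prod_prod_type]
  refine Finset.prod_congr rfl fun t _ => ?_
  simp only [eJ, pow_add, Finset.prod_mul_distrib, pow_ite, pow_one, pow_zero,
    Finset.prod_ite_eq, Finset.mem_univ, if_pos]

lemma prod_stdMoment_single (j : Fin M → Fin d) :
    (∏ p : Fin M × Fin d, stdMoment (eJ i j p))
      = ∏ t : Fin M, (if j t = i then (1:ℝ) else 0) := by
  rw [Fintype.prod_prod_type]
  refine Finset.prod_congr rfl fun t _ => ?_
  by_cases h : j t = i
  · rw [if_pos h]
    refine Finset.prod_eq_one fun m _ => ?_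
    simp only [eJ, h]
    by_cases hm : i = m
    · rw [if_pos hm]; simpa using stdMoment_two
    · rw [if_neg hm]; simpa using stdMoment_zero
  · rw [if_neg h]
    refine Finset.prod_eq_zero (Finset.mem_univ (j t)) ?_
    simp only [eJ]
    rw [if_pos trivial, if_neg (fun hh : i = j t => h hh.symm)]
    simpa using stdMoment_one

lemma prod_stdMoment_pair (j k : Fin M → Fin d) :
    (∏ p : Fin M × Fin d, stdMoment (eJ i j p + eJ i k p))
      = ∏ t : Fin M, (if j t = k t then (if j t = i then (3:ℝ) else 1) else 0) := by
  rw [Fintype.prod_prod_type]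
  refine Finset.prod_congr rfl fun t _ => ?_
  by_cases hbc : j t = k t
  · rw [if_pos hbc]
    by_cases hbi : j t = i
    · rw [if_pos hbi]
      have hki : k t = i := hbc ▸ hbi
      refine (Finset.prod_eq_single_of_mem i (Finset.mem_univ i) (fun m _ hm => ?_)).trans ?_
      · simp only [eJ, hbi, hki]
        rw [if_neg (fun hh : i = m => hm hh.symm)]
        simpa using stdMoment_zero
      · simp only [eJ, hbi, hki]
        rw [if_pos trivial]
        simpa using stdMoment_four
    · rw [if_neg hbi]
      refine Finset.prod_eq_one fun m _ => ?_
      simp only [eJ, ← hbc]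
      by_cases hm : j t = m
      · rw [if_pos hm, if_neg (fun hh : i = m => hbi (hm.trans hh.symm))]
        simpa using stdMoment_two
      · rw [if_neg hm]
        by_cases him : i = m
        · rw [if_pos him]; simpa using stdMoment_two
        · rw [if_neg him]; simpa using stdMoment_zero
  · rw [if_neg hbc]
    by_cases hbi : j t = i
    · have hki : ¬ (i = k t) := fun hh => hbc (hbi.trans hh)
      refine Finset.prod_eq_zero (Finset.mem_univ (k t)) ?_
      simp only [eJ]
      rw [if_pos trivial, if_neg hbc, if_neg hki]
      simpa using stdMoment_one
    · refine Finset.prod_eq_zero (Finset.mem_univ (j t)) ?_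
      simp only [eJ]
      rw [if_pos trivial, if_neg (fun hh : i = j t => hbi hh.symm)]
      by_cases hk : k t = j t
      · exact absurd hk.symm hbc
      · rw [if_neg hk]; simpa using stdMoment_one

end Main

section Final
variable {M d : ℕ} {Ω : Type*} [MeasureSpace Ω] [IsProbabilityMeasure (ℙ : Measure Ω)]
  (g : Fin M → Fin d → Ω → ℝ)
  (hmeas : ∀ n i, Measurable (g n i))
  (hindep : iIndepFun (fun p : Fin M × Fin d => g p.1 p.2) ℙ)
  (hdist : ∀ n i, Measure.map (g n i) ℙ = gaussianReal 0 1)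
  (i : Fin d)

include hmeas hindep hdist

lemma hXint (j : Fin M → Fin d) :
    Integrable (fun ω => ∏ t : Fin M, g t (j t) ω * g t i ω) ℙ := by
  have h := (E_prod_pow g hmeas hindep hdist (eJ i j)).1
  simpa only [← X_eq g i j] using h

lemma hEX (j : Fin M → Fin d) :
    (∫ ω, ∏ t : Fin M, g t (j t) ω * g t i ω ∂ℙ)
      = ∏ t : Fin M, (if j t = i then (1:ℝ) else 0) := by
  have h := (E_prod_pow g hmeas hindep hdist (eJ i j)).2
  simp only [← X_eq g i j] at h
  rw [h, prod_stdMoment_single]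

lemma XX_eq (j k : Fin M → Fin d) (ω : Ω) :
    (∏ t : Fin M, g t (j t) ω * g t i ω) * (∏ t : Fin M, g t (k t) ω * g t i ω)
      = ∏ p : Fin M × Fin d, g p.1 p.2 ω ^ (eJ i j p + eJ i k p) := by
  rw [X_eq g i j, X_eq g i k, ← Finset.prod_mul_distrib]
  exact Finset.prod_congr rfl fun p _ => (pow_add _ _ _).symm

lemma hXXint (j k : Fin M → Fin d) :
    Integrable (fun ω => (∏ t : Fin M, g t (j t) ω * g t i ω)
      * (∏ t : Fin M, g t (k t) ω * g t i ω)) ℙ := by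
  have h := (E_prod_pow g hmeas hindep hdist (fun p => eJ i j p + eJ i k p)).1
  simpa only [← XX_eq g hmeas hindep hdist i j k] using h

lemma hEXX (j k : Fin M → Fin d) :
    (∫ ω, (∏ t : Fin M, g t (j t) ω * g t i ω)
        * (∏ t : Fin M, g t (k t) ω * g t i ω) ∂ℙ)
      = ∏ t : Fin M, (if j t = k t then (if j t = i then (3:ℝ) else 1) else 0) := by
  have h := (E_prod_pow g hmeas hindep hdist (fun p => eJ i j p + eJ i k p)).2
  simp only [← XX_eq g hmeas hindep hdist i j k] at h
  rw [h, prod_stdMoment_pair]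

end Final

theorem diag_estimator_variance_gaussian'
    {M d : ℕ} (hM : 1 ≤ M) (hd : 1 ≤ d)
    (a : (Fin (M + 1) → Fin d) → ℝ)
    {Ω : Type*} [MeasureSpace Ω] [IsProbabilityMeasure (ℙ : Measure Ω)]
    (g : Fin M → Fin d → Ω → ℝ)
    (hmeas : ∀ n i, Measurable (g n i))
    (hindep : iIndepFun (fun p : Fin M × Fin d => g p.1 p.2) ℙ)
    (hdist : ∀ n i, Measure.map (g n i) ℙ = gaussianReal 0 1)
    (i : Fin d) :
    variance (fun ω => ∑ j : Fin M → Fin d,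
        a (Fin.snoc j i) * ∏ t : Fin M, g t (j t) ω * g t i ω) ℙ =
      (∑ s ∈ Finset.range (M + 1), (3 : ℝ) ^ s *
        (∑ j ∈ Finset.univ.filter (fun j : Fin M → Fin d =>
          (Finset.univ.filter (fun t => j t = i)).card = s), (a (Fin.snoc j i)) ^ 2)) -
      (a (fun _ => i)) ^ 2 := by
  classical
  set y : Ω → ℝ := fun ω => ∑ j : Fin M → Fin d,
    a (Fin.snoc j i) * ∏ t : Fin M, g t (j t) ω * g t i ω with hy
  have hsnoc : (Fin.snoc (fun _ => i) i : Fin (M+1) → Fin d) = fun _ => i := by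
    funext t
    induction t using Fin.lastCases with
    | last => simp
    | cast t => simp
  -- measurability
  have hXm : ∀ j : Fin M → Fin d,
      Measurable (fun ω => ∏ t : Fin M, g t (j t) ω * g t i ω) :=
    fun j => Finset.measurable_prod _ (fun t _ => (hmeas t (j t)).mul (hmeas t i))
  -- L2
  have hX2 : ∀ j : Fin M → Fin d,
      MemLp (fun ω => ∏ t : Fin M, g t (j t) ω * g t i ω) 2 ℙ := by
    intro j
    rw [memLp_two_iff_integrable_sq (hXm j).aestronglyMeasurable]
    simp only [pow_two]
    exact hXXint g hmeas hindep hdist i j j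
  have hyL2 : MemLp y 2 ℙ :=
    memLp_finset_sum _ (fun j _ => ((hX2 j).const_mul _))
  -- mean
  have hEy : (∫ ω, y ω ∂ℙ) = a (fun _ => i) := by
    rw [hy]
    rw [integral_finset_sum _
      (fun j _ => (hXint g hmeas hindep hdist i j).const_mul _)]
    have : ∀ j : Fin M → Fin d,
        (∫ ω, a (Fin.snoc j i) * ∏ t : Fin M, g t (j t) ω * g t i ω ∂ℙ)
          = a (Fin.snoc j i) * ∏ t : Fin M, (if j t = i then (1:ℝ) else 0) := by
      intro j
      rw [integral_const_mul, hEX g hmeas hindep hdist i j]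
    rw [Finset.sum_congr rfl (fun j _ => this j)]
    rw [Finset.sum_eq_single (fun _ => i)]
    · rw [Finset.prod_eq_one (fun t _ => if_pos rfl), mul_one, hsnoc]
    · intro j _ hj
      obtain ⟨t, ht⟩ : ∃ t, j t ≠ i := by
        by_contra h; push_neg at h; exact hj (funext h)
      have h0 : (∏ t : Fin M, if j t = i then (1:ℝ) else 0) = 0 :=
        Finset.prod_eq_zero (Finset.mem_univ t) (if_neg ht)
      rw [h0, mul_zero]
    · intro h; exact absurd (Finset.mem_univ _) h
  -- second moment
  have hEy2 : (∫ ω, y ω ^ 2 ∂ℙ) = ∑ j : Fin M → Fin d,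
      (a (Fin.snoc j i))^2 * (3:ℝ) ^ (Finset.univ.filter (fun t => j t = i)).card := by
    have hsq : ∀ ω, y ω ^ 2 = ∑ j : Fin M → Fin d, ∑ k : Fin M → Fin d,
        (a (Fin.snoc j i) * a (Fin.snoc k i)) *
          ((∏ t : Fin M, g t (j t) ω * g t i ω) * (∏ t : Fin M, g t (k t) ω * g t i ω)) := by
      intro ω
      rw [hy, pow_two, Finset.sum_mul_sum]
      exact Finset.sum_congr rfl fun j _ => Finset.sum_congr rfl fun k _ => by ring
    simp only [hsq]
    rw [integral_finset_sum _ (fun j _ => integrable_finset_sum _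
      (fun k _ => (hXXint g hmeas hindep hdist i j k).const_mul _))]
    have hinner : ∀ j : Fin M → Fin d,
        (∫ ω, ∑ k : Fin M → Fin d, (a (Fin.snoc j i) * a (Fin.snoc k i)) *
          ((∏ t : Fin M, g t (j t) ω * g t i ω) * (∏ t : Fin M, g t (k t) ω * g t i ω)) ∂ℙ)
        = (a (Fin.snoc j i))^2 * (3:ℝ) ^ (Finset.univ.filter (fun t => j t = i)).card := by
      intro j
      rw [integral_finset_sum _
        (fun k _ => (hXXint g hmeas hindep hdist i j k).const_mul _)]
      have : ∀ k : Fin M → Fin d,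
          (∫ ω, (a (Fin.snoc j i) * a (Fin.snoc k i)) *
            ((∏ t : Fin M, g t (j t) ω * g t i ω) * (∏ t : Fin M, g t (k t) ω * g t i ω)) ∂ℙ)
          = (a (Fin.snoc j i) * a (Fin.snoc k i)) *
              ∏ t : Fin M, (if j t = k t then (if j t = i then (3:ℝ) else 1) else 0) := by
        intro k
        rw [integral_const_mul, hEXX g hmeas hindep hdist i j k]
      rw [Finset.sum_congr rfl (fun k _ => this k)]
      rw [Finset.sum_eq_single j]
      · rw [Finset.prod_congr rfl (fun t _ => if_pos rfl), Finset.prod_ite,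
          Finset.prod_const, Finset.prod_const, one_pow, mul_one, ← pow_two]
      · intro k _ hk
        obtain ⟨t, ht⟩ : ∃ t, j t ≠ k t := by
          by_contra h; push_neg at h; exact hk (funext h).symm
        have h0 : (∏ t : Fin M,
            if j t = k t then if j t = i then (3:ℝ) else 1 else 0) = 0 :=
          Finset.prod_eq_zero (Finset.mem_univ t) (if_neg ht)
        rw [h0, mul_zero]
      · intro h; exact absurd (Finset.mem_univ _) h
    exact Finset.sum_congr rfl (fun j _ => hinner j)
  -- variance
  rw [variance_eq_sub hyL2]
  simp only [Pi.pow_apply]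
  rw [hEy2, hEy]
  congr 1
  rw [← Finset.sum_fiberwise_of_maps_to
    (g := fun j : Fin M → Fin d => (Finset.univ.filter (fun t => j t = i)).card)
    (t := Finset.range (M + 1))
    (fun j _ => Finset.mem_range.mpr (Nat.lt_succ_of_le
      ((Finset.card_filter_le _ _).trans (by simp))))
    (fun j => (a (Fin.snoc j i))^2 * (3:ℝ) ^ (Finset.univ.filter (fun t => j t = i)).card)]
  refine Finset.sum_congr rfl fun s hs => ?_
  rw [Finset.mul_sum]
  refine Finset.sum_congr rfl fun j hj => ?_
  rw [(Finset.mem_filter.mp hj).2]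
  ring

theorem diag_estimator_variance_gaussian
    {M d : ℕ} (hM : 1 ≤ M) (hd : 1 ≤ d)
    (a : (Fin (M + 1) → Fin d) → ℝ)
    {Ω : Type*} [MeasureSpace Ω] [IsProbabilityMeasure (ℙ : Measure Ω)]
    (g : Fin M → Fin d → Ω → ℝ)
    (hmeas : ∀ n i, Measurable (g n i))
    (hindep : iIndepFun (fun p : Fin M × Fin d => g p.1 p.2) ℙ)
    (hdist : ∀ n i, Measure.map (g n i) ℙ = gaussianReal 0 1)
    (i : Fin d) :
    variance (diagEstimator a g i) ℙ =
      (∑ s ∈ Finset.range (M + 1), (3 : ℝ) ^ s *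
        (∑ j ∈ Finset.univ.filter (fun j : Fin M → Fin d =>
          (Finset.univ.filter (fun t => j t = i)).card = s), (a (Fin.snoc j i)) ^ 2)) -
      (a (fun _ => i)) ^ 2 :=
  diag_estimator_variance_gaussian' hM hd a g hmeas hindep hdist i
end

section
/- Let Y_1, …, Y_{rs} be i.i.d. real-valued random variables with mean μ and finite variance σ². Partition them into r disjoint groups of size s, compute the empirical mean of each group, and let μ_MM be the median of these r group means. Then for any δ ∈ (0,1), if r ≥ 8·log(1/δ), then Pr(|μ_MM − μ| ≤ σ·√(4/s)) ≥ 1 − δ. -/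
open MeasureTheory ProbabilityTheory Finset

/-- The median of a finite family of reals (an element in position `(r-1)/2` of the
sorted list of values). -/
noncomputable def medianFn {r : ℕ} (v : Fin r → ℝ) : ℝ :=
  ((List.ofFn v).mergeSort (fun x y => x ≤ y)).getD ((r - 1) / 2) 0

lemma iIndepFun_blocks {Ω : Type*} [MeasurableSpace Ω] {μ : Measure Ω}
    {r s : ℕ} (Y : Fin r × Fin s → Ω → ℝ) (hmeas : ∀ p, Measurable (Y p))
    (hindep : iIndepFun Y μ) :
    iIndepFun
      (fun k ω t => Y (k, t) ω) μ := by
  classical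
  have hY : iIndep (fun p : Fin r × Fin s =>
      MeasurableSpace.comap (Y p) inferInstance) μ :=
    (iIndepFun_iff_iIndep _ _ _).mp hindep
  rw [iIndepFun_iff_iIndep]
  have hcomap : ∀ k : Fin r, MeasurableSpace.comap (fun ω t => Y (k, t) ω) MeasurableSpace.pi
      = ⨆ t : Fin s, MeasurableSpace.comap (Y (k, t)) inferInstance := by
    intro k
    rw [MeasurableSpace.pi, MeasurableSpace.comap_iSup]
    congr 1
    ext t : 1
    rw [MeasurableSpace.comap_comp]
    rfl
  refine iIndepSets.iIndep (fun k => ?_)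
    (fun k => piiUnionInter (fun t : Fin s =>
      {A | MeasurableSet[MeasurableSpace.comap (Y (k, t)) inferInstance] A}) Set.univ)
    (fun k => isPiSystem_piiUnionInter
      (fun t => {A | MeasurableSet[MeasurableSpace.comap (Y (k, t)) inferInstance] A})
      (fun t => @MeasurableSpace.isPiSystem_measurableSet Ω
        (MeasurableSpace.comap (Y (k, t)) inferInstance)) Set.univ)
    (fun k => ?_) ?_
  · rw [hcomap k]
    exact iSup_le fun t => Measurable.comap_le (hmeas (k, t))
  · rw [hcomap k]
    exact ((generateFrom_piiUnionInter_measurableSet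
      (fun t : Fin s => MeasurableSpace.comap (Y (k, t)) inferInstance) Set.univ).trans
      iSup_univ).symm
  · rw [iIndepSets_iff]
    intro K f hf
    have hf' : ∀ k, ∃ (T : Finset (Fin s)) (g : Fin s → Set Ω),
        (∀ t ∈ T, MeasurableSet[MeasurableSpace.comap (Y (k, t)) inferInstance] (g t)) ∧
        (k ∈ K → f k = ⋂ t ∈ T, g t) := by
      intro k
      by_cases hk : k ∈ K
      · obtain ⟨T, -, g, hg, heq⟩ := hf k hk
        exact ⟨T, g, hg, fun _ => heq⟩
      · exact ⟨∅, fun _ => Set.univ, by simp, fun h => absurd h hk⟩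
    choose T g hgmeas hfeq using hf'
    set G : Fin r × Fin s → Set Ω := fun p => g p.1 p.2 with hG
    have hmemS : ∀ k, ∀ p ∈ (T k).image (fun t => (k, t)),
        MeasurableSet[MeasurableSpace.comap (Y p) inferInstance] (G p) := by
      intro k p hp
      obtain ⟨t, ht, rfl⟩ := Finset.mem_image.mp hp
      exact hgmeas k t ht
    have hblock : ∀ k ∈ K, μ (f k) = ∏ t ∈ T k, μ (g k t) := by
      intro k hk
      rw [hfeq k hk, ← Finset.set_biInter_finset_image (f := fun t => (k, t)) (g := G) (s := T k),
        hY.meas_biInter (hmemS k), Finset.prod_image (by simp)]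
    set S : Finset (Fin r × Fin s) := K.biUnion (fun k => (T k).image (fun t => (k, t))) with hS
    have hinter : ⋂ k ∈ K, f k = ⋂ p ∈ S, G p := by
      rw [hS, Finset.set_biInter_biUnion]
      exact Set.iInter₂_congr fun k hk => by
        rw [Finset.set_biInter_finset_image (f := fun t => (k, t)) (g := G) (s := T k),
          hfeq k hk]
    rw [hinter, hY.meas_biInter, hS,
      Finset.prod_biUnion]
    · refine Finset.prod_congr rfl fun k hk => ?_
      rw [Finset.prod_image (by simp), hblock k hk]
    · intro k₁ h₁ k₂ h₂ hne
      simp only [Finset.disjoint_left]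
      intro p hp₁ hp₂
      obtain ⟨t, -, rfl⟩ := Finset.mem_image.mp hp₁
      obtain ⟨t', -, h⟩ := Finset.mem_image.mp hp₂
      exact hne (by simpa using congrArg Prod.fst h.symm)
    · intro p hp
      obtain ⟨k, hk, hp⟩ := Finset.mem_biUnion.mp hp
      exact hmemS k p hp

lemma card_filter_eq_countP_ofFn {r : ℕ} (v : Fin r → ℝ) (q : ℝ → Prop) [DecidablePred q] :
    ((univ.filter fun k => q (v k)).card = (List.ofFn v).countP (fun x => decide (q x))) := by
  rw [List.ofFn_eq_map, List.countP_map]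
  have h1 : (univ : Finset (Fin r)).val = ↑(List.finRange r) := rfl
  rw [Finset.card_def, Finset.filter_val, h1, Multiset.filter_coe, Multiset.coe_card,
    ← List.countP_eq_length_filter]
  rfl

lemma medianFn_count {r : ℕ} (hr : 0 < r) (v : Fin r → ℝ) (c ε : ℝ)
    (h : ε < |medianFn v - c|) :
    r ≤ 2 * (univ.filter fun k => ε < |v k - c|).card := by
  classical
  set p : ℝ → Bool := fun x => decide (ε < |x - c|) with hp
  set l := (List.ofFn v).mergeSort (fun x y => x ≤ y) with hl
  have hlen : l.length = r := by rw [hl, List.length_mergeSort, List.length_ofFn]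
  set idx := (r - 1) / 2 with hidx
  have hidxlt : idx < l.length := by omega
  have hcard : (univ.filter fun k => ε < |v k - c|).card = l.countP p := by
    rw [hl, (List.mergeSort_perm (List.ofFn v) _).countP_eq]
    exact card_filter_eq_countP_ofFn v (fun x => ε < |x - c|)
  have hmono : ∀ (i j : Fin l.length), i ≤ j → l.get i ≤ l.get j := by
    have hs := List.pairwise_mergeSort (le := fun x y : ℝ => decide (x ≤ y))
      (fun a b c hab hbc => by
        simp only [decide_eq_true_eq] at *
        exact le_trans hab hbc)
      (fun a b => by simpa using le_total a b) (List.ofFn v)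
    rw [List.pairwise_iff_get] at hs
    intro i j hij
    rcases eq_or_lt_of_le hij with heq | hlt
    · exact le_of_eq (congrArg l.get heq)
    · simpa using hs i j hlt
  have hmed : medianFn v = l.get ⟨idx, hidxlt⟩ := by
    rw [medianFn, ← hl, List.getD_eq_getElem l 0 hidxlt]
    rfl
  rw [hcard]
  rcases lt_abs.mp h with hhigh | hlow
  · have hall : ∀ a ∈ l.drop idx, p a = true := by
      intro a ha
      obtain ⟨j, hj, rfl⟩ := List.mem_iff_getElem.mp ha
      have hj' : idx + j < l.length := by
        have := List.length_drop (i := idx) (l := l)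
        omega
      rw [List.getElem_drop]
      have h1 : l.get ⟨idx, hidxlt⟩ ≤ l.get ⟨idx + j, hj'⟩ :=
        hmono _ _ (by simp)
      simp only [hp, decide_eq_true_eq, List.get_eq_getElem] at *
      have h2 : c + ε < l[idx + j] := by
        have := hmed ▸ hhigh
        linarith
      calc ε < l[idx + j] - c := by linarith
        _ ≤ |l[idx + j] - c| := le_abs_self _
    have hsplit : l.countP p = (l.take idx).countP p + (l.drop idx).countP p := by
      conv_lhs => rw [← List.take_append_drop idx l]
      rw [List.countP_append]
    have hd := List.countP_eq_length.mpr hall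
    have hld := List.length_drop (i := idx) (l := l)
    omega
  · have hall : ∀ a ∈ l.take (idx + 1), p a = true := by
      intro a ha
      obtain ⟨j, hj, rfl⟩ := List.mem_iff_getElem.mp ha
      have hjlen : j < l.length := by
        have := List.length_take (i := idx + 1) (l := l)
        omega
      have hjle : j ≤ idx := by
        have := List.length_take (i := idx + 1) (l := l)
        omega
      rw [List.getElem_take]
      have h1 : l.get ⟨j, hjlen⟩ ≤ l.get ⟨idx, hidxlt⟩ := hmono _ _ (by simpa using hjle)
      simp only [hp, decide_eq_true_eq, List.get_eq_getElem] at *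
      have h2 : l[j] < c - ε := by
        have := hmed ▸ hlow
        linarith
      calc ε < c - l[j] := by linarith
        _ ≤ |l[j] - c| := by rw [abs_sub_comm]; exact le_abs_self _
    have hsplit : l.countP p = (l.take (idx + 1)).countP p + (l.drop (idx + 1)).countP p := by
      conv_lhs => rw [← List.take_append_drop (idx + 1) l]
      rw [List.countP_append]
    have hd := List.countP_eq_length.mpr hall
    have hlt := List.length_take (i := idx + 1) (l := l)
    omega

set_option maxHeartbeats 1000000 in
theorem median_of_means
    {Ω : Type*} [MeasureSpace Ω] [IsProbabilityMeasure (ℙ : Measure Ω)]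
    (r s : ℕ) (hs : 1 ≤ s)
    (Y : Fin r × Fin s → Ω → ℝ)
    (hmeas : ∀ p, Measurable (Y p))
    (hindep : iIndepFun Y ℙ)
    (hident : ∀ p q, IdentDistrib (Y p) (Y q) ℙ ℙ)
    (hL2 : ∀ p, MemLp (Y p) 2 ℙ)
    (μ σ : ℝ) (hσ : 0 ≤ σ)
    (hmean : ∀ p, ∫ ω, Y p ω ∂ℙ = μ)
    (hvar : ∀ p, variance (Y p) ℙ = σ ^ 2)
    (δ : ℝ) (hδ0 : 0 < δ) (hδ1 : δ < 1)
    (hr : 8 * Real.log (1 / δ) ≤ (r : ℝ)) :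
    (1 : ℝ) - δ ≤
      (ℙ {ω | |medianFn (fun k : Fin r => (1 / (s : ℝ)) * ∑ t : Fin s, Y (k, t) ω) - μ| ≤
        σ * Real.sqrt (4 / (s : ℝ))}).toReal := by
  classical
  have hspos : (0 : ℝ) < s := by exact_mod_cast hs
  have hrpos : 0 < r := by
    by_contra hcon
    have : r = 0 := by omega
    subst this
    have h1 : (1 : ℝ) < 1 / δ := by
      rw [lt_div_iff₀ hδ0]; linarith
    have := Real.log_pos h1
    simp only [Nat.cast_zero] at hr
    linarith
  set ε : ℝ := σ * Real.sqrt (4 / (s : ℝ)) with hε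
  have hεnn : 0 ≤ ε := mul_nonneg hσ (Real.sqrt_nonneg _)
  set Z : Fin r → Ω → ℝ := fun k ω => (1 / (s : ℝ)) * ∑ t : Fin s, Y (k, t) ω with hZ
  have hZmeas : ∀ k, Measurable (Z k) := fun k =>
    (Finset.measurable_sum univ fun t _ => hmeas (k, t)).const_mul _
  have hZL2 : ∀ k, MemLp (Z k) 2 ℙ := by
    intro k
    have h1 : MemLp (∑ t : Fin s, Y (k, t)) 2 ℙ :=
      memLp_finset_sum' univ fun t _ => hL2 (k, t)
    have h2 := h1.const_mul (1 / (s : ℝ))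
    apply h2.ae_eq
    filter_upwards with ω
    simp [hZ, Finset.sum_apply]
  have hZmean : ∀ k, ∫ ω, Z k ω ∂ℙ = μ := by
    intro k
    rw [hZ]
    simp only
    rw [integral_const_mul, integral_finset_sum univ
      (fun t _ => ((hL2 (k, t)).integrable one_le_two))]
    simp only [hmean]
    rw [Finset.sum_const, Finset.card_univ, Fintype.card_fin, nsmul_eq_mul]
    field_simp
  have hZvar : ∀ k, variance (Z k) ℙ = σ ^ 2 / s := by
    intro k
    rw [hZ]
    simp only
    rw [variance_const_mul]
    have hsum : variance (fun ω => ∑ t : Fin s, Y (k, t) ω) ℙ = s * σ ^ 2 := by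
      have h1 : variance (∑ t : Fin s, Y (k, t)) ℙ = ∑ t : Fin s, variance (Y (k, t)) ℙ := by
        apply IndepFun.variance_sum (fun t _ => hL2 (k, t))
        intro t₁ _ t₂ _ hne
        exact hindep.indepFun (by simpa using hne)
      have h2 : (fun ω => ∑ t : Fin s, Y (k, t) ω) = ∑ t : Fin s, Y (k, t) := by
        funext ω; simp [Finset.sum_apply]
      rw [h2, h1]
      simp only [hvar]
      rw [Finset.sum_const, Finset.card_univ, Fintype.card_fin, nsmul_eq_mul]
    rw [hsum]
    field_simp
  -- the bad event for each block has probability at most 1/4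
  set B : Fin r → Set Ω := fun k => {ω | ε < |Z k ω - μ|} with hB
  have hBmeas : ∀ k, MeasurableSet (B k) :=
    fun k => measurableSet_lt measurable_const ((hZmeas k).sub measurable_const).abs
  have hBquarter : ∀ k, ℙ (B k) ≤ ENNReal.ofReal (1 / 4) := by
    intro k
    rcases eq_or_lt_of_le hσ with hσ0 | hσpos
    · -- σ = 0 : Z k is a.e. equal to μ
      have hvz : ∀ t, Y (k, t) =ᵐ[ℙ] fun _ => μ := by
        intro t
        have he : evariance (Y (k, t)) ℙ = 0 := by
          rw [← (hL2 (k, t)).ofReal_variance_eq, hvar, ← hσ0]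
          norm_num
        have := (evariance_eq_zero_iff (hmeas (k, t)).aemeasurable).mp he
        simpa [hmean (k, t)] using this
      have hZae : Z k =ᵐ[ℙ] fun _ => μ := by
        have hall : ∀ᵐ ω ∂ℙ, ∀ t : Fin s, Y (k, t) ω = μ := by
          rw [MeasureTheory.ae_all_iff]
          exact fun t => hvz t
        filter_upwards [hall] with ω hω
        rw [hZ]
        simp only [hω]
        rw [Finset.sum_const, Finset.card_univ, Fintype.card_fin, nsmul_eq_mul]
        field_simp
      have hBz : ℙ (B k) = 0 := by
        have hsub : ∀ᵐ ω ∂ℙ, ω ∉ B k := by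
          filter_upwards [hZae] with ω hω
          rw [hB]
          simp only [Set.mem_setOf_eq, not_lt, hω, sub_self, abs_zero]
          exact hεnn
        exact measure_eq_zero_iff_ae_notMem.mpr hsub
      rw [hBz]
      exact zero_le
    · -- σ > 0 : Chebyshev
      have hεpos : 0 < ε := by
        apply mul_pos hσpos
        apply Real.sqrt_pos.mpr
        positivity
      have hcheb := meas_ge_le_variance_div_sq (hZL2 k) hεpos
      rw [hZmean k, hZvar k] at hcheb
      have hsq : ε ^ 2 = σ ^ 2 * (4 / s) := by
        rw [hε, mul_pow, Real.sq_sqrt (by positivity)]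
      have hquarter : σ ^ 2 / (s : ℝ) / ε ^ 2 = 1 / 4 := by
        rw [hsq]
        field_simp
      calc ℙ (B k) ≤ ℙ {ω | ε ≤ |Z k ω - μ|} := by
            apply measure_mono
            intro ω hω
            rw [hB] at hω
            simp only [Set.mem_setOf_eq] at hω ⊢
            exact le_of_lt hω
        _ ≤ ENNReal.ofReal (σ ^ 2 / (s : ℝ) / ε ^ 2) := hcheb
        _ = ENNReal.ofReal (1 / 4) := by rw [hquarter]
  -- indicator variables
  set X : Fin r → Ω → ℝ := fun k ω => if ε < |Z k ω - μ| then 1 else 0 with hX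
  have hXmeas : ∀ k, Measurable (X k) := fun k =>
    Measurable.ite (hBmeas k) measurable_const measurable_const
  have hXindep : iIndepFun X ℙ := by
    have hW := iIndepFun_blocks Y hmeas hindep
    have hg : Measurable (fun y : Fin s → ℝ =>
        if ε < |(1 / (s : ℝ)) * ∑ t : Fin s, y t - μ| then (1 : ℝ) else 0) := by
      have hsum : Measurable (fun y : Fin s → ℝ => (1 / (s : ℝ)) * ∑ t : Fin s, y t - μ) :=
        (((Finset.measurable_sum univ (fun t _ => measurable_pi_apply t)).const_mul
          _).sub measurable_const)
      exact Measurable.ite (measurableSet_lt measurable_const hsum.abs)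
        measurable_const measurable_const
    exact hW.comp (fun k (y : Fin s → ℝ) =>
      if ε < |(1 / (s : ℝ)) * ∑ t : Fin s, y t - μ| then (1 : ℝ) else 0) (fun k => hg)
  -- mgf computation with t₀ = log 3
  set t₀ : ℝ := Real.log 3 with ht₀
  have ht₀nn : 0 ≤ t₀ := Real.log_nonneg (by norm_num)
  have hexp_eq : ∀ k, (fun ω => Real.exp (t₀ * X k ω)) =
      fun ω => 1 + Set.indicator (B k) (fun _ => (2 : ℝ)) ω := by
    intro k
    funext ω
    rw [hX]
    simp only
    by_cases hω : ω ∈ B k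
    · rw [Set.indicator_of_mem hω]
      rw [hB] at hω
      simp only [Set.mem_setOf_eq] at hω
      rw [if_pos hω, mul_one, ht₀, Real.exp_log (by norm_num)]
      norm_num
    · rw [Set.indicator_of_notMem hω]
      rw [hB] at hω
      simp only [Set.mem_setOf_eq] at hω
      rw [if_neg hω, mul_zero, Real.exp_zero]
      norm_num
  have hint : ∀ k, Integrable (fun ω => Real.exp (t₀ * X k ω)) ℙ := by
    intro k
    rw [hexp_eq k]
    exact (integrable_const 1).add ((integrable_const 2).indicator (hBmeas k))
  have hmgf : ∀ k, mgf (X k) ℙ t₀ ≤ 3 / 2 := by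
    intro k
    rw [mgf]
    rw [hexp_eq k]
    rw [integral_add (integrable_const 1) ((integrable_const 2).indicator (hBmeas k))]
    rw [integral_const, integral_indicator_const _ (hBmeas k)]
    simp only [measureReal_def, measure_univ, ENNReal.toReal_one, one_smul, smul_eq_mul]
    have hp : (ℙ (B k)).toReal ≤ 1 / 4 := by
      have := ENNReal.toReal_mono ENNReal.ofReal_ne_top (hBquarter k)
      rwa [ENNReal.toReal_ofReal (by norm_num)] at this
    linarith
  -- Chernoff bound
  set C : Set Ω := {ω | (r : ℝ) / 2 ≤ (∑ k, X k) ω} with hC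
  have hsumeq : (∑ k, X k) = fun ω => ∑ k, X k ω := by
    funext ω; simp [Finset.sum_apply]
  have hCmeas : MeasurableSet C := by
    apply measurableSet_le measurable_const
    rw [hsumeq]
    exact Finset.measurable_sum univ fun k _ => hXmeas k
  have hcher : (ℙ C).toReal ≤ Real.exp (-t₀ * ((r : ℝ) / 2)) * (3 / 2) ^ r := by
    have h1 := measure_ge_le_exp_mul_mgf (X := ∑ k, X k) (μ := ℙ) ((r : ℝ) / 2) ht₀nn
      (hXindep.integrable_exp_mul_sum hXmeas (fun k _ => hint k))
    refine le_trans h1 ?_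
    rw [hXindep.mgf_sum hXmeas univ]
    have h2 : ∏ k : Fin r, mgf (X k) ℙ t₀ ≤ (3 / 2) ^ r := by
      calc ∏ k : Fin r, mgf (X k) ℙ t₀ ≤ ∏ _k : Fin r, (3 / 2 : ℝ) :=
            Finset.prod_le_prod (fun k _ => mgf_nonneg) (fun k _ => hmgf k)
        _ = (3 / 2) ^ r := by simp [Finset.prod_const, div_pow]
    exact mul_le_mul_of_nonneg_left h2 (Real.exp_nonneg _)
  have hnum : Real.exp (-t₀ * ((r : ℝ) / 2)) * (3 / 2) ^ r ≤ δ := by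
    have h32 : ((3 : ℝ) / 2) ^ r = Real.exp ((r : ℝ) * Real.log (3 / 2)) := by
      rw [Real.exp_nat_mul, Real.exp_log (by norm_num)]
    rw [h32, ← Real.exp_add]
    have hlog34 : Real.log 3 - 2 * Real.log 2 ≤ -(1 / 4) := by
      have h1 : (3 / 4 : ℝ) ≤ Real.exp (-(1 / 4)) := by
        have := Real.add_one_le_exp (-(1 / 4 : ℝ))
        linarith
      have h2 : Real.log (3 / 4) ≤ -(1 / 4) := by
        calc Real.log (3 / 4) ≤ Real.log (Real.exp (-(1 / 4))) :=
              Real.log_le_log (by norm_num) h1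
          _ = -(1 / 4) := Real.log_exp _
      have h3 : Real.log (3 / 4 : ℝ) = Real.log 3 - 2 * Real.log 2 := by
        rw [show (3 / 4 : ℝ) = 3 / 2 ^ 2 by norm_num, Real.log_div (by norm_num) (by positivity),
          Real.log_pow]
        push_cast
        ring
      linarith
    have hlog32 : Real.log (3 / 2 : ℝ) = Real.log 3 - Real.log 2 :=
      Real.log_div (by norm_num) (by norm_num)
    have hδlog : -(r : ℝ) / 8 ≤ Real.log δ := by
      rw [one_div, Real.log_inv] at hr
      linarith
    have hexp : -t₀ * ((r : ℝ) / 2) + (r : ℝ) * Real.log (3 / 2) ≤ Real.log δ := by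
      have hrnn : (0 : ℝ) ≤ r := Nat.cast_nonneg r
      have key : -t₀ * ((r : ℝ) / 2) + (r : ℝ) * Real.log (3 / 2)
          = ((r : ℝ) / 2) * (Real.log 3 - 2 * Real.log 2) := by
        rw [ht₀, hlog32]; ring
      rw [key]
      calc ((r : ℝ) / 2) * (Real.log 3 - 2 * Real.log 2) ≤ ((r : ℝ) / 2) * (-(1 / 4)) := by
            apply mul_le_mul_of_nonneg_left hlog34 (by positivity)
        _ = -(r : ℝ) / 8 := by ring
        _ ≤ Real.log δ := hδlog
    calc Real.exp (-t₀ * ((r : ℝ) / 2) + (r : ℝ) * Real.log (3 / 2))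
        ≤ Real.exp (Real.log δ) := Real.exp_le_exp.mpr hexp
      _ = δ := Real.exp_log hδ0
  -- the bad event is contained in C
  have hsub : Cᶜ ⊆ {ω | |medianFn (fun k : Fin r =>
      (1 / (s : ℝ)) * ∑ t : Fin s, Y (k, t) ω) - μ| ≤ ε} := by
    intro ω hω
    simp only [Set.mem_compl_iff, hC, Set.mem_setOf_eq, not_le] at hω
    by_contra hcon
    simp only [Set.mem_setOf_eq, not_le] at hcon
    have hcount := medianFn_count hrpos (fun k => Z k ω) μ ε hcon
    have hTeq : (∑ k, X k) ω = ((univ.filter fun k => ε < |Z k ω - μ|).card : ℝ) := by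
      rw [Finset.sum_apply, hX]
      simp only
      rw [Finset.sum_boole]
    have hcount' : (r : ℝ) ≤ 2 * ((univ.filter fun k => ε < |Z k ω - μ|).card : ℝ) := by
      exact_mod_cast hcount
    rw [hTeq] at hω
    linarith
  -- conclude
  have h1 : ℙ Cᶜ ≤ ℙ {ω | |medianFn (fun k : Fin r =>
      (1 / (s : ℝ)) * ∑ t : Fin s, Y (k, t) ω) - μ| ≤ ε} := measure_mono hsub
  have h2 : (ℙ Cᶜ).toReal = 1 - (ℙ C).toReal := by
    rw [measure_compl hCmeas (measure_ne_top _ _), measure_univ,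
      ENNReal.toReal_sub_of_le prob_le_one ENNReal.one_ne_top, ENNReal.toReal_one]
  calc (1 : ℝ) - δ ≤ 1 - (ℙ C).toReal := by linarith [hcher.trans hnum]
    _ = (ℙ Cᶜ).toReal := h2.symm
    _ ≤ _ := ENNReal.toReal_mono (measure_ne_top _ _) h1
end

section
/- Suppose the entries g^{(n)}_i are i.i.d. Rademacher, fix i ∈ {1,…,d} with a_{i,…,i} ≠ 0, and let V = Σ_{(j_1,…,j_{N−1}) ∈ {1,…,d}^{N−1}} a²_{j_1,…,j_{N−1},i} − a²_{i,…,i}. Let y_i^{(1)}, …, y_i^{(K)} be K = r·s i.i.d. copies of y_i (obtained from K independent sets of the random variables g^{(n)}_i), partitioned into r disjoint groups of size s, and let M be the median of the r group means. Then for any ε > 0 and δ ∈ (0,1), if r ≥ 8·log(1/δ) and s ≥ 4·V/(ε² · a²_{i,…,i}) (in particular if K ≥ 32·V·log(1/δ)/(ε² · a²_{i,…,i})), then Pr(|M − a_{i,…,i}| ≤ ε·|a_{i,…,i}|) ≥ 1 − δ. -/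
open MeasureTheory ProbabilityTheory Finset

noncomputable def qB (b : Bool) : ℝ := if b then 1 else -1

lemma sum_prod_bool {α : Type*} [Fintype α] [DecidableEq α] (f : α → Bool → ℝ) :
    ∑ y : α → Bool, ∏ c, f c (y c) = ∏ c, (f c true + f c false) := by
  have h1 : ∏ c, (f c true + f c false) = ∏ c, ∑ b : Bool, f c b := by
    simp [Fintype.sum_bool]
  rw [h1, Finset.prod_univ_sum, Fintype.piFinset_univ]

lemma sum_prod_pow {α : Type*} [Fintype α] [DecidableEq α] (e : α → ℕ) :
    ∑ y : α → Bool, ∏ c, (qB (y c)) ^ (e c)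
      = if (∀ c, Even (e c)) then (2:ℝ) ^ (Fintype.card α) else 0 := by
  rw [sum_prod_bool (fun c b => (qB b) ^ (e c))]
  have hfac : ∀ c, (qB true) ^ (e c) + (qB false) ^ (e c)
      = if Even (e c) then (2:ℝ) else 0 := by
    intro c
    rcases Nat.even_or_odd (e c) with h | h
    · simp [qB, h, h.neg_one_pow]; norm_num
    · simp [qB, Nat.not_even_iff_odd.2 h, h.neg_one_pow]
  rw [Finset.prod_congr rfl fun c _ => hfac c]
  by_cases h : ∀ c, Even (e c)
  · rw [if_pos h, Finset.prod_congr rfl (fun c _ => if_pos (h c)), Finset.prod_const]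
    simp
  · rw [if_neg h]
    push_neg at h
    obtain ⟨c, hc⟩ := h
    exact Finset.prod_eq_zero (mem_univ c) (by simp [hc])

section EF
variable {s M d : ℕ}

def eF (i : Fin d) (l : Fin s) (j : Fin M → Fin d) : Fin s × Fin M × Fin d → ℕ :=
  fun c => if c.1 = l then
    ((if j c.2.1 = c.2.2 then 1 else 0) + (if i = c.2.2 then 1 else 0)) else 0

lemma prod_eq_monomial (i : Fin d) (l : Fin s) (j : Fin M → Fin d)
    (y : Fin s × Fin M × Fin d → Bool) :
    (∏ t : Fin M, qB (y (l, t, j t)) * qB (y (l, t, i)))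
      = ∏ c : Fin s × Fin M × Fin d, (qB (y c)) ^ (eF i l j c) := by
  rw [Fintype.prod_prod_type]
  rw [Finset.prod_eq_single l (fun l' _ hl' => by
    apply Finset.prod_eq_one
    intro p _
    simp [eF, hl'])
    (fun h => absurd (Finset.mem_univ l) h)]
  rw [Fintype.prod_prod_type]
  refine Finset.prod_congr rfl fun t _ => ?_
  have : ∀ x : Fin d, (qB (y (l, t, x))) ^ (eF i l j (l, t, x))
      = (if j t = x then qB (y (l, t, x)) else 1) * (if i = x then qB (y (l, t, x)) else 1) := by
    intro x
    by_cases h1 : j t = x <;> by_cases h2 : i = x <;> simp [eF, h1, h2] <;> ring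
  rw [Finset.prod_congr rfl fun x _ => this x, Finset.prod_mul_distrib,
    Finset.prod_ite_eq, Finset.prod_ite_eq, if_pos (mem_univ _), if_pos (mem_univ _)]

lemma even_eF_iff (i : Fin d) (l : Fin s) (j : Fin M → Fin d) :
    (∀ c, Even (eF i l j c)) ↔ ∀ t, j t = i := by
  constructor
  · intro h t
    have := h (l, t, j t)
    by_cases hji : i = j t
    · exact hji.symm
    · exfalso; simp [eF, hji] at this
  · intro h c
    obtain ⟨l', t, x⟩ := c
    by_cases hl : l' = l
    · subst hl
      by_cases hix : i = x <;> simp [eF, h t, hix] <;> decide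
    · simp [eF, hl]

lemma even_eF_add_same (i : Fin d) (l : Fin s) (j j' : Fin M → Fin d) :
    (∀ c, Even (eF i l j c + eF i l j' c)) ↔ j = j' := by
  constructor
  · intro h
    funext t
    have := h (l, t, j t)
    by_cases h1 : j' t = j t
    · exact h1.symm
    · exfalso
      by_cases h2 : i = j t <;> simp [eF, h1, h2] at this <;>
        revert this <;> decide
  · rintro rfl c
    exact (Even.add_self _)

lemma even_eF_add_ne (i : Fin d) {l l' : Fin s} (hll : l ≠ l') (j j' : Fin M → Fin d) :
    (∀ c, Even (eF i l j c + eF i l' j' c)) ↔ ((∀ t, j t = i) ∧ (∀ t, j' t = i)) := by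
  have hz : ∀ c : Fin s × Fin M × Fin d, c.1 = l' → eF i l j c = 0 := by
    intro c hc; simp [eF, hc, Ne.symm hll]
  have hz' : ∀ c : Fin s × Fin M × Fin d, ¬ c.1 = l' → eF i l' j' c = 0 := by
    intro c hc; simp [eF, hc]
  constructor
  · intro h
    constructor
    · rw [← even_eF_iff i l j]
      intro c
      by_cases hc : c.1 = l'
      · rw [hz c hc]; exact Even.zero
      · have := h c; rw [hz' c hc] at this; simpa using this
    · rw [← even_eF_iff i l' j']
      intro c
      by_cases hc : c.1 = l'
      · have := h c; rw [hz c hc] at this; simpa using this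
      · rw [hz' c hc]; exact Even.zero
  · rintro ⟨h1, h2⟩ c
    exact ((even_eF_iff i l j).2 h1 c).add ((even_eF_iff i l' j').2 h2 c)

end EF

section Moments
variable {M d s : ℕ} (a : (Fin (M + 1) → Fin d) → ℝ) (i : Fin d)

/-- the un-normalized group sum `∑_l y^{(l)}` as a function of signs. -/
noncomputable def Uf (y : Fin s × Fin M × Fin d → Bool) : ℝ :=
  ∑ l : Fin s, ∑ j : Fin M → Fin d,
    a (Fin.snoc j i) * ∏ t : Fin M, qB (y (l, t, j t)) * qB (y (l, t, i))

local notation "κc" => Fintype.card (Fin s × Fin M × Fin d)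

noncomputable def Af (l : Fin s) (y : Fin s × Fin M × Fin d → Bool) : ℝ :=
  ∑ j : Fin M → Fin d,
    a (Fin.snoc j i) * ∏ t : Fin M, qB (y (l, t, j t)) * qB (y (l, t, i))

lemma Uf_eq_sum_Af (y : Fin s × Fin M × Fin d → Bool) :
    Uf a i y = ∑ l : Fin s, Af a i l y := rfl

lemma sum_P (l : Fin s) (j : Fin M → Fin d) :
    ∑ y : Fin s × Fin M × Fin d → Bool, ∏ t : Fin M, qB (y (l, t, j t)) * qB (y (l, t, i))
      = if (∀ t, j t = i) then (2:ℝ) ^ κc else 0 := by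
  classical
  rw [Finset.sum_congr rfl fun y _ => prod_eq_monomial i l j y, sum_prod_pow,
    if_congr (even_eF_iff i l j) rfl rfl]

lemma sum_PP_same (l : Fin s) (j j' : Fin M → Fin d) :
    ∑ y : Fin s × Fin M × Fin d → Bool,
      (∏ t : Fin M, qB (y (l, t, j t)) * qB (y (l, t, i))) *
      (∏ t : Fin M, qB (y (l, t, j' t)) * qB (y (l, t, i)))
      = if j = j' then (2:ℝ) ^ κc else 0 := by
  classical
  have : ∀ y : Fin s × Fin M × Fin d → Bool,
      (∏ t : Fin M, qB (y (l, t, j t)) * qB (y (l, t, i))) *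
      (∏ t : Fin M, qB (y (l, t, j' t)) * qB (y (l, t, i)))
      = ∏ c, (qB (y c)) ^ (eF i l j c + eF i l j' c) := by
    intro y
    rw [prod_eq_monomial i l j y, prod_eq_monomial i l j' y, ← Finset.prod_mul_distrib]
    exact Finset.prod_congr rfl fun c _ => (pow_add _ _ _).symm
  rw [Finset.sum_congr rfl fun y _ => this y, sum_prod_pow,
    if_congr (even_eF_add_same i l j j') rfl rfl]

lemma sum_PP_ne {l l' : Fin s} (hll : l ≠ l') (j j' : Fin M → Fin d) :
    ∑ y : Fin s × Fin M × Fin d → Bool,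
      (∏ t : Fin M, qB (y (l, t, j t)) * qB (y (l, t, i))) *
      (∏ t : Fin M, qB (y (l', t, j' t)) * qB (y (l', t, i)))
      = if ((∀ t, j t = i) ∧ (∀ t, j' t = i)) then (2:ℝ) ^ κc else 0 := by
  classical
  have : ∀ y : Fin s × Fin M × Fin d → Bool,
      (∏ t : Fin M, qB (y (l, t, j t)) * qB (y (l, t, i))) *
      (∏ t : Fin M, qB (y (l', t, j' t)) * qB (y (l', t, i)))
      = ∏ c, (qB (y c)) ^ (eF i l j c + eF i l' j' c) := by
    intro y
    rw [prod_eq_monomial i l j y, prod_eq_monomial i l' j' y, ← Finset.prod_mul_distrib]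
    exact Finset.prod_congr rfl fun c _ => (pow_add _ _ _).symm
  rw [Finset.sum_congr rfl fun y _ => this y, sum_prod_pow,
    if_congr (even_eF_add_ne i hll j j') rfl rfl]

lemma forall_eq_iff (j : Fin M → Fin d) : (∀ t, j t = i) ↔ j = fun _ => i :=
  ⟨fun h => funext h, fun h t => congrFun h t⟩

lemma snoc_const :
    (Fin.snoc (fun _ => i) i : Fin (M+1) → Fin d) = fun _ => i := by
  funext t
  induction t using Fin.lastCases with
  | last => simp
  | cast t' => simp

lemma sum_Af (l : Fin s) :
    ∑ y : Fin s × Fin M × Fin d → Bool, Af a i l y = (2:ℝ) ^ κc * a (fun _ => i) := by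
  classical
  simp only [Af]
  rw [Finset.sum_comm]
  have : ∀ j : Fin M → Fin d,
      (∑ y : Fin s × Fin M × Fin d → Bool,
        a (Fin.snoc j i) * ∏ t : Fin M, qB (y (l, t, j t)) * qB (y (l, t, i)))
      = if j = (fun _ => i) then a (Fin.snoc j i) * (2:ℝ) ^ κc else 0 := by
    intro j
    rw [← Finset.mul_sum, sum_P, if_congr (forall_eq_iff i j) rfl rfl]
    split_ifs <;> simp
  rw [Finset.sum_congr rfl fun j _ => this j, Finset.sum_ite_eq' univ (fun _ => i)
    (fun j => a (Fin.snoc j i) * (2:ℝ) ^ κc), if_pos (mem_univ _)]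
  rw [snoc_const]; ring

lemma sum_Af_mul_same (l : Fin s) :
    ∑ y : Fin s × Fin M × Fin d → Bool, Af a i l y * Af a i l y
      = (2:ℝ) ^ κc * ∑ j : Fin M → Fin d, (a (Fin.snoc j i))^2 := by
  classical
  simp only [Af, Finset.sum_mul_sum]
  rw [Finset.sum_comm]
  have : ∀ j : Fin M → Fin d,
      (∑ y : Fin s × Fin M × Fin d → Bool, ∑ j' : Fin M → Fin d,
        (a (Fin.snoc j i) * ∏ t : Fin M, qB (y (l, t, j t)) * qB (y (l, t, i))) *
        (a (Fin.snoc j' i) * ∏ t : Fin M, qB (y (l, t, j' t)) * qB (y (l, t, i))))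
      = (2:ℝ) ^ κc * (a (Fin.snoc j i))^2 := by
    intro j
    rw [Finset.sum_comm]
    have h2 : ∀ j' : Fin M → Fin d,
        (∑ y : Fin s × Fin M × Fin d → Bool,
          (a (Fin.snoc j i) * ∏ t : Fin M, qB (y (l, t, j t)) * qB (y (l, t, i))) *
          (a (Fin.snoc j' i) * ∏ t : Fin M, qB (y (l, t, j' t)) * qB (y (l, t, i))))
        = if j = j' then a (Fin.snoc j i) * a (Fin.snoc j' i) * (2:ℝ) ^ κc else 0 := by
      intro j'
      have : ∀ y : Fin s × Fin M × Fin d → Bool,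
          (a (Fin.snoc j i) * ∏ t : Fin M, qB (y (l, t, j t)) * qB (y (l, t, i))) *
          (a (Fin.snoc j' i) * ∏ t : Fin M, qB (y (l, t, j' t)) * qB (y (l, t, i)))
          = a (Fin.snoc j i) * a (Fin.snoc j' i) *
            ((∏ t : Fin M, qB (y (l, t, j t)) * qB (y (l, t, i))) *
             (∏ t : Fin M, qB (y (l, t, j' t)) * qB (y (l, t, i)))) := fun y => by ring
      rw [Finset.sum_congr rfl fun y _ => this y, ← Finset.mul_sum, sum_PP_same]
      split_ifs <;> simp
    rw [Finset.sum_congr rfl fun j' _ => h2 j']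
    rw [Finset.sum_ite_eq univ j (fun j' => a (Fin.snoc j i) * a (Fin.snoc j' i) * (2:ℝ) ^ κc),
      if_pos (mem_univ _)]
    ring
  rw [Finset.sum_congr rfl fun j _ => this j, ← Finset.mul_sum]

lemma sum_Af_mul_ne {l l' : Fin s} (hll : l ≠ l') :
    ∑ y : Fin s × Fin M × Fin d → Bool, Af a i l y * Af a i l' y
      = (2:ℝ) ^ κc * (a (fun _ => i))^2 := by
  classical
  simp only [Af, Finset.sum_mul_sum]
  rw [Finset.sum_comm]
  have key : ∀ j : Fin M → Fin d,
      (∑ y : Fin s × Fin M × Fin d → Bool, ∑ j' : Fin M → Fin d,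
        (a (Fin.snoc j i) * ∏ t : Fin M, qB (y (l, t, j t)) * qB (y (l, t, i))) *
        (a (Fin.snoc j' i) * ∏ t : Fin M, qB (y (l', t, j' t)) * qB (y (l', t, i))))
      = if j = (fun _ => i) then
          a (Fin.snoc j i) * a (fun _ => i) * (2:ℝ) ^ κc else 0 := by
    intro j
    rw [Finset.sum_comm]
    have h2 : ∀ j' : Fin M → Fin d,
        (∑ y : Fin s × Fin M × Fin d → Bool,
          (a (Fin.snoc j i) * ∏ t : Fin M, qB (y (l, t, j t)) * qB (y (l, t, i))) *
          (a (Fin.snoc j' i) * ∏ t : Fin M, qB (y (l', t, j' t)) * qB (y (l', t, i))))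
        = if ((∀ t, j t = i) ∧ (∀ t, j' t = i)) then
            a (Fin.snoc j i) * a (Fin.snoc j' i) * (2:ℝ) ^ κc else 0 := by
      intro j'
      have : ∀ y : Fin s × Fin M × Fin d → Bool,
          (a (Fin.snoc j i) * ∏ t : Fin M, qB (y (l, t, j t)) * qB (y (l, t, i))) *
          (a (Fin.snoc j' i) * ∏ t : Fin M, qB (y (l', t, j' t)) * qB (y (l', t, i)))
          = a (Fin.snoc j i) * a (Fin.snoc j' i) *
            ((∏ t : Fin M, qB (y (l, t, j t)) * qB (y (l, t, i))) *
             (∏ t : Fin M, qB (y (l', t, j' t)) * qB (y (l', t, i)))) := fun y => by ring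
      rw [Finset.sum_congr rfl fun y _ => this y, ← Finset.mul_sum, sum_PP_ne i hll]
      split_ifs <;> simp
    rw [Finset.sum_congr rfl fun j' _ => h2 j']
    by_cases hj : ∀ t, j t = i
    · rw [if_pos ((forall_eq_iff i j).1 hj)]
      have : ∀ j' : Fin M → Fin d,
          (if ((∀ t, j t = i) ∧ (∀ t, j' t = i)) then
            a (Fin.snoc j i) * a (Fin.snoc j' i) * (2:ℝ) ^ κc else 0)
          = if j' = (fun _ => i) then a (Fin.snoc j i) * a (Fin.snoc j' i) * (2:ℝ) ^ κc
            else 0 := by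
        intro j'
        apply if_congr _ rfl rfl
        rw [← forall_eq_iff i j']
        exact ⟨fun h => h.2, fun h => ⟨hj, h⟩⟩
      rw [Finset.sum_congr rfl fun j' _ => this j',
        Finset.sum_ite_eq' univ (fun _ => i)
          (fun j' => a (Fin.snoc j i) * a (Fin.snoc j' i) * (2:ℝ) ^ κc),
        if_pos (mem_univ _), snoc_const]
    · rw [if_neg (fun hc => hj (fun t => congrFun hc t))]
      have : ∀ j' : Fin M → Fin d,
          (if ((∀ t, j t = i) ∧ (∀ t, j' t = i)) then
            a (Fin.snoc j i) * a (Fin.snoc j' i) * (2:ℝ) ^ κc else 0) = 0 := by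
        intro j'; rw [if_neg (fun hc => hj hc.1)]
      rw [Finset.sum_congr rfl fun j' _ => this j', Finset.sum_const, smul_zero]
  rw [Finset.sum_congr rfl fun j _ => key j,
    Finset.sum_ite_eq' univ (fun _ => i)
      (fun j => a (Fin.snoc j i) * a (fun _ => i) * (2:ℝ) ^ κc),
    if_pos (mem_univ _), snoc_const]
  ring

lemma sum_Uf :
    ∑ y : Fin s × Fin M × Fin d → Bool, Uf a i y
      = (2:ℝ) ^ κc * ((s:ℝ) * a (fun _ => i)) := by
  classical
  simp only [Uf_eq_sum_Af]
  rw [Finset.sum_comm, Finset.sum_congr rfl fun l _ => sum_Af a i l,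
    Finset.sum_const, card_univ, Fintype.card_fin, nsmul_eq_mul]
  ring

lemma sum_Uf_sq (hs : 1 ≤ s) :
    ∑ y : Fin s × Fin M × Fin d → Bool, (Uf a i y)^2
      = (2:ℝ) ^ κc * ((s:ℝ) * (∑ j : Fin M → Fin d, (a (Fin.snoc j i))^2)
          + ((s:ℝ)^2 - (s:ℝ)) * (a (fun _ => i))^2) := by
  classical
  have hexp : ∀ y : Fin s × Fin M × Fin d → Bool, (Uf a i y)^2
      = ∑ l : Fin s, ∑ l' : Fin s, Af a i l y * Af a i l' y := by
    intro y
    rw [Uf_eq_sum_Af, sq, Finset.sum_mul_sum]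
  rw [Finset.sum_congr rfl fun y _ => hexp y, Finset.sum_comm]
  have hl : ∀ l : Fin s,
      (∑ y : Fin s × Fin M × Fin d → Bool, ∑ l' : Fin s, Af a i l y * Af a i l' y)
      = (2:ℝ) ^ κc * (∑ j : Fin M → Fin d, (a (Fin.snoc j i))^2)
        + ((s:ℝ) - 1) * ((2:ℝ) ^ κc * (a (fun _ => i))^2) := by
    intro l
    rw [Finset.sum_comm]
    rw [← Finset.add_sum_erase univ _ (mem_univ l)]
    rw [sum_Af_mul_same a i l]
    congr 1
    rw [Finset.sum_congr rfl
      (fun l' hl' => sum_Af_mul_ne a i (Ne.symm (Finset.ne_of_mem_erase hl'))),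
      Finset.sum_const, Finset.card_erase_of_mem (mem_univ l), card_univ,
      Fintype.card_fin, nsmul_eq_mul]
    rw [Nat.cast_sub hs]
    norm_num
  rw [Finset.sum_congr rfl fun l _ => hl l, Finset.sum_const, card_univ,
    Fintype.card_fin, nsmul_eq_mul]
  ring

lemma sum_dev_sq (hs : 1 ≤ s) :
    ∑ y : Fin s × Fin M × Fin d → Bool, (Uf a i y - (s:ℝ) * a (fun _ => i))^2
      = (2:ℝ) ^ κc * ((s:ℝ) *
          ((∑ j : Fin M → Fin d, (a (Fin.snoc j i))^2) - (a (fun _ => i))^2)) := by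
  classical
  have hexp : ∀ y : Fin s × Fin M × Fin d → Bool,
      (Uf a i y - (s:ℝ) * a (fun _ => i))^2
      = (Uf a i y)^2 - 2 * ((s:ℝ) * a (fun _ => i)) * Uf a i y
        + ((s:ℝ) * a (fun _ => i))^2 := fun y => by ring
  rw [Finset.sum_congr rfl fun y _ => hexp y]
  rw [Finset.sum_add_distrib, Finset.sum_sub_distrib, ← Finset.mul_sum,
    sum_Uf_sq a i hs, sum_Uf a i, Finset.sum_const, card_univ, nsmul_eq_mul]
  have hcard : ((Fintype.card (Fin s × Fin M × Fin d → Bool) : ℕ) : ℝ) = (2:ℝ) ^ κc := by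
    rw [Fintype.card_fun, Fintype.card_bool]
    push_cast
    ring
  rw [hcard]
  ring

end Moments

noncomputable def mB : Measure Bool :=
  (2 : ENNReal)⁻¹ • Measure.dirac true + (2 : ENNReal)⁻¹ • Measure.dirac false

instance : IsProbabilityMeasure radMeasure := by
  constructor
  simp [radMeasure]
  exact ENNReal.inv_two_add_inv_two

instance : IsProbabilityMeasure mB := by
  constructor
  simp [mB]
  exact ENNReal.inv_two_add_inv_two

lemma qB_measurable : Measurable qB := measurable_from_top

lemma map_qB : Measure.map qB mB = radMeasure := by
  rw [mB, Measure.map_add _ _ qB_measurable, Measure.map_smul, Measure.map_smul,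
    Measure.map_dirac' qB_measurable, Measure.map_dirac' qB_measurable]
  rfl

lemma mB_singleton (b : Bool) : mB {b} = 2⁻¹ := by
  cases b <;>
    simp [mB, Measure.dirac_apply, Set.indicator, Set.mem_singleton_iff]

section PiBool
variable {γ : Type*} [Fintype γ]

lemma singleton_eq_pi (x : γ → Bool) :
    ({x} : Set (γ → Bool)) = Set.univ.pi (fun c => {x c}) := by
  ext y
  simp [Set.mem_pi, funext_iff, eq_comm]

lemma measurableSet_singleton_pi (x : γ → Bool) :
    MeasurableSet ({x} : Set (γ → Bool)) := by
  rw [singleton_eq_pi]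
  exact MeasurableSet.univ_pi fun c => measurableSet_singleton _

lemma measurableSet_all (S : Set (γ → Bool)) : MeasurableSet S := by
  have : S = ⋃ x ∈ S, {x} := by simp
  rw [this]
  exact MeasurableSet.biUnion (Set.to_countable S)
    (fun x _ => measurableSet_singleton_pi x)

lemma pi_bool_singleton (x : γ → Bool) :
    Measure.pi (fun _ : γ => mB) {x} = 2⁻¹ ^ (Fintype.card γ) := by
  rw [singleton_eq_pi, Measure.pi_pi]
  simp [mB_singleton]

lemma pi_bool_finset (E : Finset (γ → Bool)) :
    Measure.pi (fun _ : γ => mB) ↑E = (E.card : ENNReal) * 2⁻¹ ^ (Fintype.card γ) := by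
  classical
  have h1 : (↑E : Set (γ → Bool)) = ⋃ x ∈ E, {x} := by ext y; simp
  rw [h1, measure_biUnion_finset
    (fun x _ y _ hxy => by simpa [Set.disjoint_singleton] using hxy)
    (fun x _ => measurableSet_singleton_pi x)]
  rw [Finset.sum_congr rfl (fun x _ => pi_bool_singleton x), Finset.sum_const,
    nsmul_eq_mul]
end PiBool

lemma log_four_thirds : (1/4 : ℝ) ≤ Real.log (4/3) := by
  rw [Real.le_log_iff_exp_le (by norm_num : (0:ℝ) < 4/3)]
  have h4 : (Real.exp (1/4))^4 = Real.exp 1 := by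
    rw [← Real.exp_nat_mul]
    norm_num
  have he : Real.exp 1 < 2.7182818286 := Real.exp_one_lt_d9
  nlinarith [Real.exp_pos (1/4 : ℝ), sq_nonneg (Real.exp (1/4) - 4/3),
    sq_nonneg (Real.exp (1/4) + 4/3), sq_nonneg ((Real.exp (1/4))^2 - 16/9),
    sq_nonneg ((Real.exp (1/4))^2 + 16/9)]

lemma chernoff_real (r mnat : ℕ) (δ : ℝ) (hδ0 : 0 < δ)
    (hr : 8 * Real.log (1/δ) ≤ (r:ℝ)) (hm : (r:ℝ)/2 ≤ (mnat:ℝ)) :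
    ((3:ℝ)/2)^r ≤ 3^mnat * δ := by
  have h32 : ((3:ℝ)/2)^r = Real.exp ((r:ℝ) * Real.log (3/2)) := by
    rw [← Real.log_pow, Real.exp_log (by positivity)]
  have h3m : (3:ℝ)^mnat * δ = Real.exp ((mnat:ℝ) * Real.log 3 + Real.log δ) := by
    rw [Real.exp_add, ← Real.log_pow, Real.exp_log (by positivity), Real.exp_log hδ0]
  rw [h32, h3m]
  apply Real.exp_le_exp.2
  have hlogd : Real.log (1/δ) = - Real.log δ := by
    rw [one_div, Real.log_inv]
  rw [hlogd] at hr
  have hA : Real.log ((3:ℝ)/2) = Real.log 3 - Real.log 2 :=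
    Real.log_div (by norm_num) (by norm_num)
  have hB : Real.log ((4:ℝ)/3) = 2 * Real.log 2 - Real.log 3 := by
    rw [Real.log_div (by norm_num) (by norm_num)]
    have : Real.log (4:ℝ) = 2 * Real.log 2 := by
      rw [show (4:ℝ) = 2^2 by norm_num, Real.log_pow]
      push_cast
      ring
    rw [this]
  have hC := log_four_thirds
  have hlog3 : (0:ℝ) ≤ Real.log 3 := Real.log_nonneg (by norm_num)
  have hkey : Real.log ((3:ℝ)/2) - (1/2) * Real.log 3 + 1/8 ≤ 0 := by
    rw [hA]
    linarith [hB ▸ hC]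
  have hr0 : (0:ℝ) ≤ (r:ℝ) := Nat.cast_nonneg r
  have h1 : (r:ℝ) * (Real.log (3/2) - (1/2) * Real.log 3 + 1/8) ≤ 0 :=
    mul_nonpos_of_nonneg_of_nonpos hr0 hkey
  have h2 : (r:ℝ)/2 * Real.log 3 ≤ (mnat:ℝ) * Real.log 3 :=
    mul_le_mul_of_nonneg_right hm hlog3
  nlinarith

lemma median_count {r : ℕ} (hr : 1 ≤ r) (v : Fin r → ℝ) (aa c : ℝ) (hc : 0 ≤ c)
    (hbad : ¬ |medianFn v - aa| ≤ c) :
    (((r-1)/2 + 1 : ℕ) : ℝ) ≤ ∑ k : Fin r, (if c < |v k - aa| then (1:ℝ) else 0) := by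
  classical
  set p := (r-1)/2 with hp
  set L := (List.ofFn v).mergeSort (fun x y => x ≤ y) with hL
  have hlen : L.length = r := by
    rw [hL, List.length_mergeSort, List.length_ofFn]
  have hpr : p < L.length := by rw [hlen]; omega
  have hmed : medianFn v = L.get ⟨p, hpr⟩ := by
    rw [medianFn, ← hL, ← hp, List.getD_eq_getElem L 0 hpr]
    simp
  have hsorted : L.Pairwise (· ≤ ·) := by
    have := List.pairwise_mergeSort (le := fun x y : ℝ => decide (x ≤ y))
      (fun a b c hab hbc => by
        simp only [decide_eq_true_eq] at *
        exact le_trans hab hbc)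
      (fun a b => by
        simp only [Bool.or_eq_true, decide_eq_true_eq]
        exact le_total a b)
      (List.ofFn v)
    refine this.imp ?_
    intro a b h
    simpa using h
  have hperm : L.Perm (List.ofFn v) := List.mergeSort_perm _ _
  set f : ℝ → ℝ := fun z => if c < |z - aa| then (1:ℝ) else 0 with hf
  have hsum1 : ∑ k : Fin r, (if c < |v k - aa| then (1:ℝ) else 0)
      = ((List.ofFn v).map f).sum := by
    rw [List.map_ofFn, List.sum_ofFn]
    rfl
  have hsum2 : ((List.ofFn v).map f).sum = (L.map f).sum :=
    ((hperm.map f).sum_eq).symm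
  have hsum3 : (L.map f).sum = ∑ q : Fin L.length, f (L.get q) := by
    conv_lhs => rw [← List.ofFn_get L]
    rw [List.map_ofFn, List.sum_ofFn]
    simp
  rw [hsum1, hsum2, hsum3]
  rw [not_le] at hbad
  have hptle : ∀ q : Fin L.length, (0:ℝ) ≤ f (L.get q) := by
    intro q; rw [hf]; dsimp only; split_ifs <;> norm_num
  have key : ∀ P : ℕ → Prop, ∀ _ : DecidablePred P,
      (∀ q : Fin L.length, P (q:ℕ) → f (L.get q) = 1) →
      ∀ m : ℕ, ((m:ℝ) ≤ ∑ n ∈ (Finset.range L.length).filter P, (1:ℝ)) →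
      (m:ℝ) ≤ ∑ q : Fin L.length, f (L.get q) := by
    intro P _ hP m hm
    refine le_trans hm ?_
    have h1 : ∑ n ∈ (Finset.range L.length).filter P, (1:ℝ)
        = ∑ q : Fin L.length, (if P (q:ℕ) then (1:ℝ) else 0) := by
      rw [Fin.sum_univ_eq_sum_range (fun n => if P n then (1:ℝ) else 0),
        ← Finset.sum_filter]
    rw [h1]
    apply Finset.sum_le_sum
    intro q _
    split_ifs with hq
    · rw [hP q hq]
    · exact hptle q
  rcases lt_abs.1 hbad with hhigh | hlow
  · -- median too high
    refine key (fun n => p ≤ n) inferInstance ?_ _ ?_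
    · intro q hq
      have hle : L.get ⟨p, hpr⟩ ≤ L.get q := hsorted.rel_get_of_le hq
      rw [hmed] at hhigh
      have h2 : c < L.get q - aa := by linarith
      rw [hf]
      exact if_pos (lt_of_lt_of_le h2 (le_abs_self _))
    · have hfil : (Finset.range L.length).filter (fun n => p ≤ n)
          = Finset.Ico p L.length := by
        ext n
        simp only [Finset.mem_filter, Finset.mem_range, Finset.mem_Ico]
        omega
      rw [hfil, Finset.sum_const, Nat.card_Ico, nsmul_eq_mul, mul_one]
      have : p + 1 ≤ L.length - p := by omega
      exact_mod_cast this
  · -- median too low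
    refine key (fun n => n ≤ p) inferInstance ?_ _ ?_
    · intro q hq
      have hle : L.get q ≤ L.get ⟨p, hpr⟩ := hsorted.rel_get_of_le hq
      rw [hmed] at hlow
      have h2 : c < -(L.get q - aa) := by linarith
      rw [hf]
      exact if_pos (lt_of_lt_of_le h2 (neg_le_abs _))
    · have hfil : (Finset.range L.length).filter (fun n => n ≤ p)
          = Finset.range (p+1) := by
        ext n
        simp only [Finset.mem_filter, Finset.mem_range]
        omega
      rw [hfil, Finset.sum_const, Finset.card_range, nsmul_eq_mul, mul_one]

section Chernoff
variable {M d s : ℕ} (a : (Fin (M + 1) → Fin d) → ℝ) (i : Fin d)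
local notation "κc" => Fintype.card (Fin s × Fin M × Fin d)

/-- Chebyshev counting bound at the block level. -/
lemma block_bound (hs : 1 ≤ s) {c0 : ℝ} (hc0 : 0 < c0)
    (hV : (∑ j : Fin M → Fin d, (a (Fin.snoc j i))^2) - (a (fun _ => i))^2
        ≤ (s:ℝ) * c0^2 / 4) :
    ∑ y : Fin s × Fin M × Fin d → Bool,
      (1 + 2 * (if c0 < |(1/(s:ℝ)) * Uf a i y - a (fun _ => i)| then (1:ℝ) else 0))
      ≤ (3/2) * (2:ℝ) ^ κc := by
  classical
  have hspos : (0:ℝ) < s := by exact_mod_cast hs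
  have hcard : ((Fintype.card (Fin s × Fin M × Fin d → Bool) : ℕ) : ℝ) = (2:ℝ) ^ κc := by
    rw [Fintype.card_fun, Fintype.card_bool]; push_cast; ring
  have hind : ∑ y : Fin s × Fin M × Fin d → Bool,
      (if c0 < |(1/(s:ℝ)) * Uf a i y - a (fun _ => i)| then (1:ℝ) else 0)
      ≤ (2:ℝ) ^ κc / 4 := by
    have hpt : ∀ y : Fin s × Fin M × Fin d → Bool,
        c0^2 * (if c0 < |(1/(s:ℝ)) * Uf a i y - a (fun _ => i)| then (1:ℝ) else 0)
        ≤ ((1/(s:ℝ)) * Uf a i y - a (fun _ => i))^2 := by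
      intro y
      split_ifs with h
      · have h1 : c0 ≤ |(1/(s:ℝ)) * Uf a i y - a (fun _ => i)| := le_of_lt h
        rw [mul_one, ← sq_abs ((1/(s:ℝ)) * Uf a i y - a (fun _ => i))]
        exact pow_le_pow_left₀ hc0.le h1 2
      · simpa using sq_nonneg ((1/(s:ℝ)) * Uf a i y - a (fun _ => i))
    have hsum : c0^2 * ∑ y : Fin s × Fin M × Fin d → Bool,
        (if c0 < |(1/(s:ℝ)) * Uf a i y - a (fun _ => i)| then (1:ℝ) else 0)
        ≤ ∑ y : Fin s × Fin M × Fin d → Bool,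
          ((1/(s:ℝ)) * Uf a i y - a (fun _ => i))^2 := by
      rw [Finset.mul_sum]
      exact Finset.sum_le_sum fun y _ => hpt y
    have hrewrite : ∀ y : Fin s × Fin M × Fin d → Bool,
        ((1/(s:ℝ)) * Uf a i y - a (fun _ => i))^2
        = (1/(s:ℝ))^2 * (Uf a i y - (s:ℝ) * a (fun _ => i))^2 := by
      intro y
      field_simp
    rw [Finset.sum_congr rfl fun y _ => hrewrite y, ← Finset.mul_sum,
      sum_dev_sq a i hs] at hsum
    have hfinal : (1/(s:ℝ))^2 * ((2:ℝ) ^ κc * ((s:ℝ) *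
        ((∑ j : Fin M → Fin d, (a (Fin.snoc j i))^2) - (a (fun _ => i))^2)))
        ≤ c0^2 * ((2:ℝ) ^ κc / 4) := by
      have h2 : (1/(s:ℝ))^2 * ((2:ℝ) ^ κc * ((s:ℝ) * ((∑ j : Fin M → Fin d,
          (a (Fin.snoc j i))^2) - (a (fun _ => i))^2)))
          ≤ (1/(s:ℝ))^2 * ((2:ℝ) ^ κc * ((s:ℝ) * ((s:ℝ) * c0^2 / 4))) := by
        apply mul_le_mul_of_nonneg_left _ (by positivity)
        apply mul_le_mul_of_nonneg_left _ (by positivity)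
        exact mul_le_mul_of_nonneg_left hV (by positivity)
      calc (1/(s:ℝ))^2 * ((2:ℝ) ^ κc * ((s:ℝ) *
          ((∑ j : Fin M → Fin d, (a (Fin.snoc j i))^2) - (a (fun _ => i))^2)))
          ≤ (1/(s:ℝ))^2 * ((2:ℝ) ^ κc * ((s:ℝ) * ((s:ℝ) * c0^2 / 4))) := h2
        _ = c0^2 * ((2:ℝ) ^ κc / 4) := by field_simp
    have hc2 : (0:ℝ) < c0^2 := by positivity
    exact le_of_mul_le_mul_left (le_trans hsum hfinal) hc2
  have hsplit : ∑ y : Fin s × Fin M × Fin d → Bool,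
      (1 + 2 * (if c0 < |(1/(s:ℝ)) * Uf a i y - a (fun _ => i)| then (1:ℝ) else 0))
      = (2:ℝ) ^ κc + 2 * ∑ y : Fin s × Fin M × Fin d → Bool,
        (if c0 < |(1/(s:ℝ)) * Uf a i y - a (fun _ => i)| then (1:ℝ) else 0) := by
    rw [Finset.sum_add_distrib, ← Finset.mul_sum, Finset.sum_const, card_univ,
      nsmul_eq_mul, mul_one, hcard]
  rw [hsplit]
  linarith

/-- factorization of a product of block functionals over the whole sign space. -/
lemma global_sum {r : ℕ} {κT : Type*} [Fintype κT] [DecidableEq κT]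
    (F : (κT → Bool) → ℝ) :
    ∑ b : (Fin r × κT) → Bool, ∏ k : Fin r, F (fun c => b (k, c))
      = (∑ y : κT → Bool, F y) ^ r := by
  classical
  have h1 : ∑ b : (Fin r × κT) → Bool, ∏ k : Fin r, F (fun c => b (k, c))
      = ∑ p : Fin r → (κT → Bool), ∏ k : Fin r, F (p k) :=
    Equiv.sum_comp (Equiv.curry (Fin r) κT Bool) (fun p => ∏ k : Fin r, F (p k))
  rw [h1, ← Fintype.piFinset_univ, ← Finset.prod_univ_sum, Finset.prod_const,
    card_univ, Fintype.card_fin]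
end Chernoff


theorem diag_median_of_means_rademacher
    {M d : ℕ} (hM : 1 ≤ M) (hd : 1 ≤ d)
    (a : (Fin (M + 1) → Fin d) → ℝ)
    {Ω : Type*} [MeasureSpace Ω] [IsProbabilityMeasure (ℙ : Measure Ω)]
    (r s : ℕ) (hs : 1 ≤ s)
    (G : Fin r → Fin s → Fin M → Fin d → Ω → ℝ)
    (hmeas : ∀ k l n i, Measurable (G k l n i))
    (hindep : iIndepFun
      (fun p : Fin r × Fin s × Fin M × Fin d => G p.1 p.2.1 p.2.2.1 p.2.2.2) ℙ)
    (hdist : ∀ k l n i, Measure.map (G k l n i) ℙ = radMeasure)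
    (i : Fin d) (hai : a (fun _ => i) ≠ 0)
    (ε δ : ℝ) (hε : 0 < ε) (hδ0 : 0 < δ) (hδ1 : δ < 1)
    (hr : 8 * Real.log (1 / δ) ≤ (r : ℝ))
    (hs' : 4 * ((∑ j : Fin M → Fin d, (a (Fin.snoc j i)) ^ 2) - (a (fun _ => i)) ^ 2) / (ε ^ 2 * (a (fun _ => i)) ^ 2) ≤ (s : ℝ)) :
    (1 : ℝ) - δ ≤
      (ℙ {ω | |medianFn (fun k : Fin r =>
          (1 / (s : ℝ)) * ∑ l : Fin s, diagEstimator a (G k l) i ω) - a (fun _ => i)| ≤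
        ε * |a (fun _ => i)|}).toReal := by
  classical
  -- Basic facts
  have hr1 : 1 ≤ r := by
    have hlog : 0 < Real.log (1/δ) := Real.log_pos (by rw [lt_div_iff₀ hδ0]; linarith)
    have hrpos : (0:ℝ) < r := lt_of_lt_of_le (by linarith) hr
    have : 0 < r := by exact_mod_cast hrpos
    omega
  have hc0 : 0 < ε * |a (fun _ => i)| := mul_pos hε (abs_pos.2 hai)
  set mnat := (r-1)/2 + 1 with hmnat
  -- the canonical map
  have hΦmeas : Measurable (fun ω (p : Fin r × Fin s × Fin M × Fin d) =>
      G p.1 p.2.1 p.2.2.1 p.2.2.2 ω) :=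
    measurable_pi_lambda _ fun p => hmeas _ _ _ _
  have hmapΦ : Measure.map (fun ω (p : Fin r × Fin s × Fin M × Fin d) =>
        G p.1 p.2.1 p.2.2.1 p.2.2.2 ω) ℙ
      = Measure.pi (fun _ : Fin r × Fin s × Fin M × Fin d => radMeasure) := by
    refine (Measure.pi_eq fun sets hsets => ?_).symm
    rw [Measure.map_apply hΦmeas (MeasurableSet.univ_pi hsets)]
    have hpre : (fun ω (p : Fin r × Fin s × Fin M × Fin d) =>
          G p.1 p.2.1 p.2.2.1 p.2.2.2 ω) ⁻¹' (Set.univ.pi sets)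
        = ⋂ p ∈ (univ : Finset (Fin r × Fin s × Fin M × Fin d)),
            (fun ω => G p.1 p.2.1 p.2.2.1 p.2.2.2 ω) ⁻¹' sets p := by
      ext ω
      simp [Set.mem_pi]
    rw [hpre, hindep.measure_inter_preimage_eq_mul univ (fun p _ => hsets p)]
    refine Finset.prod_congr rfl fun p _ => ?_
    rw [← hdist p.1 p.2.1 p.2.2.1 p.2.2.2,
      Measure.map_apply (hmeas _ _ _ _) (hsets p)]
  -- the bad set on the real-valued canonical space
  set S' : Set (Fin r × Fin s × Fin M × Fin d → ℝ) :=
    {x | (mnat:ℝ) ≤ ∑ k : Fin r, (if ε * |a (fun _ => i)| <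
      |(1/(s:ℝ)) * (∑ l : Fin s, ∑ j : Fin M → Fin d,
        a (Fin.snoc j i) * ∏ t : Fin M, x (k,l,t,j t) * x (k,l,t,i))
        - a (fun _ => i)| then (1:ℝ) else 0)} with hS'def
  have hS'meas : MeasurableSet S' := by
    apply measurableSet_le measurable_const
    apply Finset.measurable_sum
    intro k _
    refine Measurable.ite (measurableSet_lt measurable_const ?_)
      measurable_const measurable_const
    apply Measurable.abs
    apply Measurable.sub _ measurable_const
    apply Measurable.const_mul
    apply Finset.measurable_sum
    intro l _
    apply Finset.measurable_sum
    intro j _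
    apply Measurable.const_mul
    apply Finset.measurable_prod
    intro t _
    exact (measurable_pi_apply _).mul (measurable_pi_apply _)
  -- inclusion of the complement into the good event
  have hsub : (fun ω (p : Fin r × Fin s × Fin M × Fin d) =>
        G p.1 p.2.1 p.2.2.1 p.2.2.2 ω) ⁻¹' S'ᶜ
      ⊆ {ω | |medianFn (fun k : Fin r =>
          (1 / (s : ℝ)) * ∑ l : Fin s, diagEstimator a (G k l) i ω) - a (fun _ => i)| ≤
        ε * |a (fun _ => i)|} := by
    intro ω hω
    simp only [Set.mem_preimage, Set.mem_compl_iff, hS'def, Set.mem_setOf_eq, not_le] at hω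
    by_contra hcon
    simp only [Set.mem_setOf_eq] at hcon
    have hmc := median_count hr1 (fun k : Fin r =>
        (1 / (s : ℝ)) * ∑ l : Fin s, diagEstimator a (G k l) i ω)
      (a (fun _ => i)) (ε * |a (fun _ => i)|) hc0.le hcon
    exact absurd hmc (not_le.2 hω)
  -- pushing to the Boolean cube
  have hQ : MeasurePreserving (fun (b : Fin r × Fin s × Fin M × Fin d → Bool) p => qB (b p))
      (Measure.pi fun _ : Fin r × Fin s × Fin M × Fin d => mB)
      (Measure.pi fun _ : Fin r × Fin s × Fin M × Fin d => radMeasure) :=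
    measurePreserving_pi _ _ (fun _ => ⟨qB_measurable, map_qB⟩)
  set E : Finset (Fin r × Fin s × Fin M × Fin d → Bool) :=
    univ.filter (fun b => (mnat:ℝ) ≤ ∑ k : Fin r,
      (if ε * |a (fun _ => i)| <
        |(1/(s:ℝ)) * Uf a i (fun c => b (k, c)) - a (fun _ => i)| then (1:ℝ) else 0))
    with hEdef
  have hE : (fun (b : Fin r × Fin s × Fin M × Fin d → Bool) p => qB (b p)) ⁻¹' S' = ↑E := by
    ext b
    simp only [Set.mem_preimage, hS'def, Set.mem_setOf_eq, hEdef, Finset.coe_filter,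
      Finset.mem_univ, true_and]
    exact Iff.rfl
  -- the real counting bound
  have hVs : (∑ j : Fin M → Fin d, (a (Fin.snoc j i))^2) - (a (fun _ => i))^2
      ≤ (s:ℝ) * (ε * |a (fun _ => i)|)^2 / 4 := by
    have hpos : (0:ℝ) < ε ^ 2 * (a (fun _ => i)) ^ 2 := by
      have := abs_pos.2 hai
      positivity
    have h1 := (div_le_iff₀ hpos).1 hs'
    have h2 : (ε * |a (fun _ => i)|)^2 = ε ^ 2 * (a (fun _ => i)) ^ 2 := by
      rw [mul_pow, sq_abs]
    rw [h2]
    nlinarith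
  have hblock := block_bound a i hs hc0 hVs
  have hm : (r:ℝ)/2 ≤ (mnat:ℝ) := by
    have : r ≤ 2 * mnat := by omega
    have h2 : (r:ℝ) ≤ 2 * (mnat:ℝ) := by exact_mod_cast this
    linarith
  have hch := chernoff_real r mnat δ hδ0 hr hm
  -- abbreviations
  have hHpt : ∀ b ∈ E, (3:ℝ)^mnat ≤ ∏ k : Fin r,
      (1 + 2 * (if ε * |a (fun _ => i)| <
        |(1/(s:ℝ)) * Uf a i (fun c => b (k, c)) - a (fun _ => i)| then (1:ℝ) else 0)) := by
    intro b hb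
    rw [hEdef, Finset.mem_filter] at hb
    have hb2 := hb.2
    rw [Finset.sum_boole] at hb2
    have hble : mnat ≤ (univ.filter (fun k : Fin r => ε * |a (fun _ => i)| <
        |(1/(s:ℝ)) * Uf a i (fun c => b (k, c)) - a (fun _ => i)|)).card := by
      exact_mod_cast hb2
    have hprod : ∏ k : Fin r,
        (1 + 2 * (if ε * |a (fun _ => i)| <
          |(1/(s:ℝ)) * Uf a i (fun c => b (k, c)) - a (fun _ => i)| then (1:ℝ) else 0))
        = ∏ k : Fin r, (if ε * |a (fun _ => i)| <
          |(1/(s:ℝ)) * Uf a i (fun c => b (k, c)) - a (fun _ => i)| then (3:ℝ) else 1) := by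
      refine Finset.prod_congr rfl fun k _ => ?_
      split_ifs <;> norm_num
    rw [hprod, Finset.prod_ite, Finset.prod_const, Finset.prod_const, one_pow, mul_one]
    exact pow_le_pow_right₀ (by norm_num) hble
  have hHnn : ∀ b : Fin r × Fin s × Fin M × Fin d → Bool, (0:ℝ) ≤ ∏ k : Fin r,
      (1 + 2 * (if ε * |a (fun _ => i)| <
        |(1/(s:ℝ)) * Uf a i (fun c => b (k, c)) - a (fun _ => i)| then (1:ℝ) else 0)) := by
    intro b
    apply Finset.prod_nonneg
    intro k _
    split_ifs <;> norm_num
  have hcount : (E.card : ℝ) * 3^mnat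
      ≤ ((3/2) * (2:ℝ) ^ (Fintype.card (Fin s × Fin M × Fin d)))^r := by
    calc (E.card : ℝ) * 3^mnat
        = ∑ _b ∈ E, (3:ℝ)^mnat := by rw [Finset.sum_const, nsmul_eq_mul]
      _ ≤ ∑ b ∈ E, ∏ k : Fin r,
          (1 + 2 * (if ε * |a (fun _ => i)| <
            |(1/(s:ℝ)) * Uf a i (fun c => b (k, c)) - a (fun _ => i)| then (1:ℝ) else 0)) :=
          Finset.sum_le_sum hHpt
      _ ≤ ∑ b : Fin r × Fin s × Fin M × Fin d → Bool, ∏ k : Fin r,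
          (1 + 2 * (if ε * |a (fun _ => i)| <
            |(1/(s:ℝ)) * Uf a i (fun c => b (k, c)) - a (fun _ => i)| then (1:ℝ) else 0)) :=
          Finset.sum_le_sum_of_subset_of_nonneg (Finset.subset_univ E)
            (fun b _ _ => hHnn b)
      _ = (∑ y : Fin s × Fin M × Fin d → Bool,
          (1 + 2 * (if ε * |a (fun _ => i)| <
            |(1/(s:ℝ)) * Uf a i y - a (fun _ => i)| then (1:ℝ) else 0)))^r :=
          global_sum (fun y => 1 + 2 * (if ε * |a (fun _ => i)| <
            |(1/(s:ℝ)) * Uf a i y - a (fun _ => i)| then (1:ℝ) else 0))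
      _ ≤ ((3/2) * (2:ℝ) ^ (Fintype.card (Fin s × Fin M × Fin d)))^r := by
          apply pow_le_pow_left₀
          · apply Finset.sum_nonneg
            intro y _
            split_ifs <;> norm_num
          · exact hblock
  have hfinalreal : (E.card : ℝ)
      ≤ δ * ((2:ℝ) ^ (Fintype.card (Fin s × Fin M × Fin d)))^r := by
    have h3 : (0:ℝ) < 3^mnat := by positivity
    have h2n : (0:ℝ) ≤ ((2:ℝ) ^ (Fintype.card (Fin s × Fin M × Fin d)))^r := by positivity
    have hc2 := mul_le_mul_of_nonneg_right hch h2n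
    rw [mul_pow] at hcount
    have : (E.card : ℝ) * 3^mnat ≤ (3^mnat * δ) *
        ((2:ℝ) ^ (Fintype.card (Fin s × Fin M × Fin d)))^r := le_trans hcount hc2
    have h4 : 3^mnat * ((E.card:ℝ)) ≤ 3^mnat *
        (δ * ((2:ℝ) ^ (Fintype.card (Fin s × Fin M × Fin d)))^r) := by linarith
    exact le_of_mul_le_mul_left h4 h3
  -- ENNReal bound for the bad set
  have hπS' : Measure.pi (fun _ : Fin r × Fin s × Fin M × Fin d => radMeasure) S'
      ≤ ENNReal.ofReal δ := by
    rw [← hQ.measure_preimage hS'meas.nullMeasurableSet, hE, pi_bool_finset]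
    have hkey : (E.card : ENNReal) * 2⁻¹ ^ (Fintype.card (Fin r × Fin s × Fin M × Fin d))
        = ENNReal.ofReal ((E.card : ℝ) *
          (2:ℝ)⁻¹ ^ (Fintype.card (Fin r × Fin s × Fin M × Fin d))) := by
      rw [ENNReal.ofReal_mul (Nat.cast_nonneg _), ENNReal.ofReal_natCast,
        ENNReal.ofReal_pow (by norm_num), ENNReal.ofReal_inv_of_pos (by norm_num),
        ENNReal.ofReal_ofNat]
    rw [hkey]
    apply ENNReal.ofReal_le_ofReal
    have hcardι : Fintype.card (Fin r × Fin s × Fin M × Fin d)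
        = r * Fintype.card (Fin s × Fin M × Fin d) := by
      rw [Fintype.card_prod, Fintype.card_fin]
    rw [hcardι, inv_pow, ← div_eq_mul_inv, div_le_iff₀ (by positivity)]
    refine hfinalreal.trans (le_of_eq ?_)
    rw [← pow_mul, Nat.mul_comm]
  -- conclusion
  have hfin : (1:ENNReal) - ENNReal.ofReal δ ≤
      ℙ {ω | |medianFn (fun k : Fin r =>
          (1 / (s : ℝ)) * ∑ l : Fin s, diagEstimator a (G k l) i ω) - a (fun _ => i)| ≤
        ε * |a (fun _ => i)|} := by
    calc (1:ENNReal) - ENNReal.ofReal δ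
        ≤ Measure.pi (fun _ : Fin r × Fin s × Fin M × Fin d => radMeasure) S'ᶜ := by
          rw [prob_compl_eq_one_sub hS'meas]
          exact tsub_le_tsub_left hπS' 1
      _ = ℙ ((fun ω (p : Fin r × Fin s × Fin M × Fin d) =>
            G p.1 p.2.1 p.2.2.1 p.2.2.2 ω) ⁻¹' S'ᶜ) := by
          rw [← hmapΦ, Measure.map_apply hΦmeas hS'meas.compl]
      _ ≤ _ := measure_mono hsub
  have h1δ : ENNReal.ofReal (1 - δ) ≤
      ℙ {ω | |medianFn (fun k : Fin r =>
          (1 / (s : ℝ)) * ∑ l : Fin s, diagEstimator a (G k l) i ω) - a (fun _ => i)| ≤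
        ε * |a (fun _ => i)|} := by
    calc ENNReal.ofReal (1 - δ) = 1 - ENNReal.ofReal δ := by
          rw [ENNReal.ofReal_sub _ hδ0.le, ENNReal.ofReal_one]
      _ ≤ _ := hfin
  have := ENNReal.toReal_mono (measure_ne_top ℙ _) h1δ
  rwa [ENNReal.toReal_ofReal (by linarith)] at this
end

section
/- The trace estimator is an unbiased estimator of the trace of the tensor: E[X] = tr(A) = Σ_{i=1}^d a_{i,…,i}. -/
open MeasureTheory ProbabilityTheory Finset

/-- The trace estimator `X = Σ_i y_i`. -/
noncomputable def traceEstimator {M d : ℕ} (a : (Fin (M + 1) → Fin d) → ℝ)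
    {Ω : Type*} (g : Fin M → Fin d → Ω → ℝ) (ω : Ω) : ℝ :=
  ∑ i : Fin d, diagEstimator a g i ω

lemma pow_le_one_add_pow_four (e : ℕ) (he : e ≤ 4) (x : ℝ) :
    |x| ^ e ≤ 1 + x ^ 4 := by
  have h4 : x ^ 4 = |x| ^ 4 := by rw [← abs_pow, abs_of_nonneg (by positivity)]
  rcases le_total (|x|) 1 with h | h
  · have h1 : |x| ^ e ≤ 1 := pow_le_one₀ (abs_nonneg x) h
    nlinarith [pow_nonneg (abs_nonneg x) 4]
  · have h1 : |x| ^ e ≤ |x| ^ 4 := pow_le_pow_right₀ h he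
    nlinarith

lemma integral_prod_of_iIndepFun {ι : Type*} {Ω : Type*} [MeasureSpace Ω]
    [IsProbabilityMeasure (ℙ : Measure Ω)] {f : ι → Ω → ℝ}
    (hindep : iIndepFun f ℙ)
    (hmeas : ∀ i, Measurable (f i)) (hint : ∀ i, Integrable (f i) ℙ)
    (s : Finset ι) :
    Integrable (∏ i ∈ s, f i) ℙ ∧
      ∫ ω, (∏ i ∈ s, f i) ω ∂ℙ = ∏ i ∈ s, ∫ ω, f i ω ∂ℙ := by
  classical
  induction s using Finset.induction_on with
  | empty => exact ⟨by simpa [Pi.one_def] using integrable_const (1:ℝ), by simp⟩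
  | insert i s hi ih =>
    have hIF : IndepFun (f i) (∏ j ∈ s, f j) ℙ :=
      (hindep.indepFun_finsetProd_of_notMem hmeas hi).symm
    rw [Finset.prod_insert hi, Finset.prod_insert hi]
    constructor
    · exact hIF.integrable_mul (hint i) ih.1
    · rw [hIF.integral_mul_eq_mul_integral (hint i).1 ih.1.1, ih.2]

/-- Exponent of `g (p.1) (p.2)` in the product `∏ t, g t (j t) * g t i`. -/
def expo {M d : ℕ} (j : Fin M → Fin d) (i : Fin d) (p : Fin M × Fin d) : ℕ :=
  (if p.2 = j p.1 then 1 else 0) + (if p.2 = i then 1 else 0)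

lemma prod_expo_eq {M d : ℕ} (x : Fin M → Fin d → ℝ) (j : Fin M → Fin d) (i : Fin d) :
    (∏ p : Fin M × Fin d, x p.1 p.2 ^ expo j i p) = ∏ t : Fin M, x t (j t) * x t i := by
  rw [Fintype.prod_prod_type]
  refine Finset.prod_congr rfl fun t _ => ?_
  simp only [expo, pow_add]
  rw [Finset.prod_mul_distrib]
  congr 1
  · have : ∀ k : Fin d, x t k ^ (if k = j t then 1 else 0)
        = if k = j t then x t k else 1 := by
      intro k; split_ifs <;> simp
    simp only [this]
    simp
  · have : ∀ k : Fin d, x t k ^ (if k = i then 1 else 0)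
        = if k = i then x t k else 1 := by
      intro k; split_ifs <;> simp
    simp only [this]
    simp

theorem trace_estimator_unbiased
    {M d : ℕ} (hM : 1 ≤ M) (hd : 1 ≤ d)
    (a : (Fin (M + 1) → Fin d) → ℝ)
    {Ω : Type*} [MeasureSpace Ω] [IsProbabilityMeasure (ℙ : Measure Ω)]
    (g : Fin M → Fin d → Ω → ℝ)
    (hmeas : ∀ n i, Measurable (g n i))
    (hindep : iIndepFun (fun p : Fin M × Fin d => g p.1 p.2) ℙ)
    (hident : ∀ n i n' i', IdentDistrib (g n i) (g n' i') ℙ ℙ)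
    (hmean : ∀ n i, ∫ ω, g n i ω ∂ℙ = 0)
    (hsecond : ∀ n i, ∫ ω, (g n i ω) ^ 2 ∂ℙ = 1)
    (hfourth : ∀ n i, Integrable (fun ω => (g n i ω) ^ 4) ℙ)
    :
    ∫ ω, traceEstimator a g ω ∂ℙ = ∑ i : Fin d, a (fun _ => i) := by
  classical
  have hpow : ∀ (n : Fin M) (i : Fin d) (e : ℕ), e ≤ 4 →
      Integrable (fun ω => g n i ω ^ e) ℙ := by
    intro n i e he
    refine Integrable.mono ((integrable_const (1:ℝ)).add (hfourth n i))
      ((hmeas n i).pow_const e).aestronglyMeasurable ?_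
    filter_upwards with ω
    have h1 := pow_le_one_add_pow_four e he (g n i ω)
    have h0 : (0:ℝ) ≤ 1 + g n i ω ^ 4 := by positivity
    simpa [Real.norm_eq_abs, abs_pow, abs_of_nonneg h0] using h1
  have hprodint : ∀ (j : Fin M → Fin d) (i : Fin d),
      Integrable (fun ω => ∏ t : Fin M, g t (j t) ω * g t i ω) ℙ ∧
      ∫ ω, ∏ t : Fin M, g t (j t) ω * g t i ω ∂ℙ
        = ∏ p : Fin M × Fin d, ∫ ω, g p.1 p.2 ω ^ expo j i p ∂ℙ := by
    intro j i
    have hind2 : iIndepFun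
        (fun p : Fin M × Fin d => fun ω => g p.1 p.2 ω ^ expo j i p) ℙ :=
      hindep.comp (fun p (x : ℝ) => x ^ expo j i p)
        (fun p => measurable_id.pow_const _)
    have key := integral_prod_of_iIndepFun hind2
      (fun p => (hmeas p.1 p.2).pow_const _)
      (fun p => hpow p.1 p.2 _ (by unfold expo; split_ifs <;> norm_num)) Finset.univ
    have hfun : (∏ p : Fin M × Fin d, fun ω => g p.1 p.2 ω ^ expo j i p)
        = fun ω => ∏ t : Fin M, g t (j t) ω * g t i ω := by
      funext ω
      rw [Finset.prod_apply]
      exact prod_expo_eq (fun n k => g n k ω) j i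
    rw [hfun] at key
    exact key
  have hsnoc : ∀ i : Fin d, (Fin.snoc (fun _ => i) i : Fin (M+1) → Fin d) = fun _ => i := by
    intro i
    funext k
    simp [Fin.snoc]
  have hterm : ∀ (j : Fin M → Fin d) (i : Fin d),
      ∫ ω, a (Fin.snoc j i) * ∏ t : Fin M, g t (j t) ω * g t i ω ∂ℙ
        = if j = (fun _ => i) then a (fun _ => i) else 0 := by
    intro j i
    rw [integral_const_mul, (hprodint j i).2]
    by_cases h : j = fun _ => i
    · subst h
      have hone : ∀ p : Fin M × Fin d,
          ∫ ω, g p.1 p.2 ω ^ expo (fun _ => i) i p ∂ℙ = 1 := by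
        intro p
        by_cases hp : p.2 = i
        · have he2 : expo (fun _ => i) i p = 2 := by simp [expo, hp]
          rw [he2]; exact hsecond p.1 p.2
        · have he0 : expo (fun _ => i) i p = 0 := by simp [expo, hp]
          rw [he0]; simp
      simp [hone, hsnoc]
    · obtain ⟨t, ht⟩ : ∃ t, j t ≠ i := by
        by_contra hc; push_neg at hc; exact h (funext hc)
      rw [if_neg h]
      have hz : ∫ ω, g (t, i).1 (t, i).2 ω ^ expo j i (t, i) ∂ℙ = 0 := by
        have he1 : expo j i (t, i) = 1 := by
          simp [expo, if_neg (Ne.symm ht)]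
        rw [he1]
        simpa using hmean t i
      rw [Finset.prod_eq_zero (Finset.mem_univ (t, i)) hz, mul_zero]
  calc ∫ ω, traceEstimator a g ω ∂ℙ
      = ∑ i : Fin d, ∑ j : Fin M → Fin d,
          ∫ ω, a (Fin.snoc j i) * ∏ t : Fin M, g t (j t) ω * g t i ω ∂ℙ := by
        simp only [traceEstimator, diagEstimator]
        rw [integral_finset_sum _ (fun i _ => integrable_finset_sum _
          (fun j _ => ((hprodint j i).1.const_mul _)))]
        exact Finset.sum_congr rfl fun i _ =>
          integral_finset_sum _ (fun j _ => ((hprodint j i).1.const_mul _))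
    _ = ∑ i : Fin d, ∑ j : Fin M → Fin d,
          if j = (fun _ => i) then a (fun _ => i) else 0 :=
        Finset.sum_congr rfl fun i _ => Finset.sum_congr rfl fun j _ => hterm j i
    _ = ∑ i : Fin d, a (fun _ => i) := by
        refine Finset.sum_congr rfl fun i _ => ?_
        simp
end
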